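/- arXiv:2302.11035 — 10 statements merged into one kernel-verified Lean document; each statement's English description precedes it below -/
import Mathlib

section
/- Let M be a courteously colored matroid of rank r whose ground set is colored with exactly k colors, where k ≥ 2 and r ≥ 1. Then the ground set of M has at least ⌈k·r/(k-1)⌉ elements. -/
/-- A colored matroid is courteously colored if after deleting the elements of any single color
the rank does not change; equivalently, for every color some basis avoids that color. -/
def Matroid.CourteouslyColored {α C : Type*} (M : Matroid α) (col : α → C) : Prop :=
  ∀ c : C, ∃ B, M.IsBase B ∧ ∀ e ∈ B, col e ≠ c

/-- A courteously colored matroid of rank `r ≥ 1` whose ground set is colored with exactly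
`k ≥ 2` colors has at least `⌈k·r/(k-1)⌉` elements. -/
theorem stmt6 {α C : Type*} (M : Matroid α) (col : α → C) (k r : ℕ)
    (hE : M.E.Finite) (hk : 2 ≤ k) (hr : 1 ≤ r)
    (hcols : (col '' M.E).ncard = k)
    (hrank : ∀ B, M.IsBase B → B.ncard = r)
    (hc : M.CourteouslyColored col) :
    (k * r + k - 2) / (k - 1) ≤ M.E.ncard := by
  classical
  set n := M.E.ncard with hn
  set F : Finset α := hE.toFinset with hF
  have hFcard : F.card = n := by
    rw [hn, Set.ncard_eq_toFinset_card M.E hE]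
  -- each fiber has card + r ≤ n
  have hfiber : ∀ c ∈ F.image col, (F.filter (fun e => col e = c)).card + r ≤ n := by
    intro c _
    obtain ⟨B, hB, hBc⟩ := hc c
    have hBE : B ⊆ M.E := hB.subset_ground
    have hBfin : B.Finite := hE.subset hBE
    set Bf : Finset α := hBfin.toFinset with hBf
    have hBcard : Bf.card = r := by
      rw [← hrank B hB, Set.ncard_eq_toFinset_card B hBfin]
    have hdisj : Disjoint (F.filter (fun e => col e = c)) Bf := by
      rw [Finset.disjoint_left]
      intro a ha haB
      have h1 : col a = c := (Finset.mem_filter.mp ha).2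
      exact hBc a (hBfin.mem_toFinset.mp haB) h1
    have hsub : (F.filter (fun e => col e = c)) ∪ Bf ⊆ F := by
      intro a ha
      rcases Finset.mem_union.mp ha with h | h
      · exact Finset.filter_subset _ _ h
      · exact hE.mem_toFinset.mpr (hBE (hBfin.mem_toFinset.mp h))
    calc (F.filter (fun e => col e = c)).card + r
        = ((F.filter (fun e => col e = c)) ∪ Bf).card := by
          rw [Finset.card_union_of_disjoint hdisj, hBcard]
      _ ≤ F.card := Finset.card_le_card hsub
      _ = n := hFcard
  have himg : (F.image col).card = k := by
    rw [← hcols]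
    have : col '' M.E = ↑(F.image col) := by
      rw [Finset.coe_image, hE.coe_toFinset]
    rw [this, Set.ncard_coe_finset]
  have hsum : F.card = ∑ c ∈ F.image col, (F.filter (fun e => col e = c)).card :=
    Finset.card_eq_sum_card_image col F
  have hmain : n + k * r ≤ k * n := by
    calc n + k * r = ∑ c ∈ F.image col, ((F.filter (fun e => col e = c)).card + r) := by
          rw [Finset.sum_add_distrib, ← hsum, hFcard, Finset.sum_const, himg, smul_eq_mul,
            mul_comm]
      _ ≤ ∑ _c ∈ F.image col, n := Finset.sum_le_sum hfiber
      _ = k * n := by rw [Finset.sum_const, himg, smul_eq_mul]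
  have hkr : k * r ≤ (k - 1) * n := by
    have : (k - 1) * n = k * n - n := by
      rw [Nat.sub_one_mul]
    omega
  have hk1 : 0 < k - 1 := by omega
  rw [Nat.div_le_iff_le_mul_add_pred hk1]
  calc k * r + k - 2 ≤ (k - 1) * n + (k - 2) := by omega
    _ ≤ (k - 1) * n + (k - 1 - 1) := by omega
end

section
/- Let M = (S, I) be a courteously colored matroid of rank r such that for every element s in S, the matroid obtained by deleting s is not courteously colored. Then |S| ≤ 2r. -/
private lemma base_basis_of_subset' {α : Type*} {M : Matroid α} {B X : Set α}
    (hB : M.IsBase B) (hBX : B ⊆ X) (hX : X ⊆ M.E) : M.IsBasis B X :=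
  hB.indep.isBasis_of_maximal_subset hBX
    (fun J hJ hBJ _ => (hB.eq_of_subset_indep hJ hBJ).symm.subset) hX

private lemma fiber_card_le_of_card_le {α C : Type*} [DecidableEq α] [DecidableEq C]
    (K B : Finset α) (f g : α → C)
    (h : ∀ c : C, (K.filter (fun s => f s = c)).card ≤ (B.filter (fun e => g e = c)).card) :
    K.card ≤ B.card := by
  calc K.card = ∑ c ∈ K.image f, (K.filter (fun s => f s = c)).card :=
        Finset.card_eq_sum_card_fiberwise (fun x hx => Finset.mem_image_of_mem f hx)
    _ ≤ ∑ c ∈ K.image f, (B.filter (fun e => g e = c)).card :=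
        Finset.sum_le_sum (fun c _ => h c)
    _ = ((K.image f).biUnion (fun c => B.filter (fun e => g e = c))).card := by
        rw [Finset.card_biUnion]
        intro c _ d _ hcd
        rw [Function.onFun, Finset.disjoint_left]
        intro x hx hx'
        rw [Finset.mem_filter] at hx hx'
        exact hcd (hx.2 ▸ hx'.2 ▸ rfl)
    _ ≤ B.card :=
        Finset.card_le_card (Finset.biUnion_subset.2 fun c _ => Finset.filter_subset _ _)

/-- If `M` is a courteously colored matroid of rank `r` such that deleting any single element
of the ground set destroys the courteous property, then the ground set has at most `2r`
elements. -/
theorem stmt8 {α C : Type*} (M : Matroid α) (col : α → C) (r : ℕ) (hE : M.E.Finite)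
    (hc : M.CourteouslyColored col)
    (hrank : ∀ B, M.IsBase B → B.ncard = r)
    (hmin : ∀ s ∈ M.E, ¬ (M.restrict (M.E \ {s})).CourteouslyColored col) :
    M.E.ncard ≤ 2 * r := by
  classical
  obtain ⟨B0, hB0⟩ := M.exists_isBase
  have hB0E : B0 ⊆ M.E := hB0.subset_ground
  have hB0fin : B0.Finite := hE.subset hB0E
  have hB0card : B0.ncard = r := hrank B0 hB0
  -- Key pointwise fact: every element `s` of the ground set has a color `c ≠ col s` such that
  -- every base of `M` avoiding color `c` contains `s`.
  have hkey : ∀ s : α, ∃ c : C, s ∈ M.E →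
      col s ≠ c ∧ ∀ B, M.IsBase B → (∀ e ∈ B, col e ≠ c) → s ∈ B := by
    intro s
    by_cases hs : s ∈ M.E
    swap
    · exact ⟨col s, fun h => absurd h hs⟩
    have h := hmin s hs
    rw [Matroid.CourteouslyColored] at h
    push_neg at h
    obtain ⟨c, hcall⟩ := h
    have hPin : ∀ B, M.IsBase B → (∀ e ∈ B, col e ≠ c) → s ∈ B := by
      intro B hB havoid
      by_contra hsB
      have hBsub : B ⊆ M.E \ {s} := fun x hx =>
        ⟨hB.subset_ground hx, fun hxs => hsB (by rwa [Set.mem_singleton_iff.1 hxs] at hx)⟩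
      have hrB : (M.restrict (M.E \ {s})).IsBase B :=
        (Matroid.isBase_restrict_iff Set.diff_subset).2
          (base_basis_of_subset' hB hBsub Set.diff_subset)
      obtain ⟨e, heB, hec⟩ := hcall B hrB
      exact havoid e heB hec
    obtain ⟨Bc, hBc, hBcavoid⟩ := hc c
    exact ⟨c, fun _ => ⟨hBcavoid s (hPin Bc hBc hBcavoid), hPin⟩⟩
  choose f hf using hkey
  -- Per-color bound: the elements of `M.E \ B0` assigned color `c` are at most as many as
  -- the elements of `B0` with color `c`.
  have hL2 : ∀ c : C, {s | s ∈ M.E \ B0 ∧ f s = c}.ncard ≤ (B0 ∩ col ⁻¹' {c}).ncard := by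
    intro c
    set X : Set α := M.E \ col ⁻¹' {c} with hX
    have hXE : X ⊆ M.E := Set.diff_subset
    have hIind : M.Indep (B0 \ col ⁻¹' {c}) := hB0.indep.subset Set.diff_subset
    obtain ⟨B', hB'basis, hIB'⟩ :=
      hIind.subset_isBasis_of_subset (Set.diff_subset_diff_left hB0E) hXE
    obtain ⟨Bc, hBc, hBcavoid⟩ := hc c
    have hBcX : Bc ⊆ X := fun x hx => ⟨hBc.subset_ground hx, hBcavoid x hx⟩
    have hBcbasis : M.IsBasis Bc X := base_basis_of_subset' hBc hBcX hXE
    have hB'card : B'.ncard = r := by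
      rw [Set.ncard_def, hB'basis.encard_eq_encard hBcbasis, ← Set.ncard_def]
      exact hrank Bc hBc
    have hB'fin : B'.Finite := hE.subset (hB'basis.indep.subset_ground)
    -- B' is a base of M
    obtain ⟨B'', hB'', hsub⟩ := hB'basis.indep.exists_isBase_superset
    have hB''fin : B''.Finite := hE.subset hB''.subset_ground
    have hB'eq : B' = B'' :=
      Set.eq_of_subset_of_ncard_le hsub (by rw [hrank B'' hB'', hB'card]) hB''fin
    have hB'base : M.IsBase B' := hB'eq ▸ hB''
    have havoid' : ∀ e ∈ B', col e ≠ c := fun e he hec =>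
      (hB'basis.subset he).2 (by simpa using hec)
    have hXcB' : {s | s ∈ M.E \ B0 ∧ f s = c} ⊆ B' := by
      rintro s ⟨⟨hsE, _⟩, hfs⟩
      exact (hf s hsE).2 B' hB'base (hfs ▸ havoid')
    have hdisj : Disjoint {s | s ∈ M.E \ B0 ∧ f s = c} (B0 \ col ⁻¹' {c}) := by
      rw [Set.disjoint_left]
      rintro s ⟨⟨_, hsB0⟩, _⟩ hsI
      exact hsB0 hsI.1
    have hXcfin : {s | s ∈ M.E \ B0 ∧ f s = c}.Finite :=
      (hE.diff (t := B0)).subset (fun s hs => hs.1)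
    have h1 : {s | s ∈ M.E \ B0 ∧ f s = c}.ncard + (B0 \ col ⁻¹' {c}).ncard ≤ r := by
      rw [← Set.ncard_union_eq hdisj hXcfin (hB0fin.diff (t := _)), ← hB'card]
      exact Set.ncard_le_ncard (Set.union_subset hXcB' hIB') hB'fin
    have h2 : (B0 ∩ col ⁻¹' {c}).ncard + (B0 \ col ⁻¹' {c}).ncard = r := by
      rw [← hB0card]
      exact Set.ncard_inter_add_ncard_diff_eq_ncard B0 _ hB0fin
    omega
  -- Summing over colors
  have hKfin : (M.E \ B0).Finite := hE.diff (t := B0)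
  have hcount : hKfin.toFinset.card ≤ hB0fin.toFinset.card := by
    apply fiber_card_le_of_card_le hKfin.toFinset hB0fin.toFinset f col
    intro c
    have hsetK : ((hKfin.toFinset.filter (fun s => f s = c) : Finset α) : Set α)
        = {s | s ∈ M.E \ B0 ∧ f s = c} := by
      ext x
      simp
    have hsetB : ((hB0fin.toFinset.filter (fun e => col e = c) : Finset α) : Set α)
        = B0 ∩ col ⁻¹' {c} := by
      ext x
      simp only [Finset.coe_filter, Set.Finite.mem_toFinset, Set.mem_setOf_eq,
        Set.mem_inter_iff, Set.mem_preimage, Set.mem_singleton_iff]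
    have := hL2 c
    rwa [← hsetK, ← hsetB, Set.ncard_coe_finset, Set.ncard_coe_finset] at this
  have e1 : (M.E \ B0).ncard = hKfin.toFinset.card := by
    rw [← Set.ncard_coe_finset, Set.Finite.coe_toFinset]
  have e2 : B0.ncard = hB0fin.toFinset.card := by
    rw [← Set.ncard_coe_finset, Set.Finite.coe_toFinset]
  have hKle : (M.E \ B0).ncard ≤ r := by omega
  have hsplit : (M.E \ B0).ncard + B0.ncard = M.E.ncard :=
    Set.ncard_diff_add_ncard_of_subset hB0E hE
  omega
end

section
/- Let M = (S, I) be a courteously colored matroid of rank r, let B be a basis of M, and for each color c let y_c denote the number of elements of color c in B. Then for any superset T of B contained in S and any color c, the rank of T minus the rank of the set of elements of T not colored c is at most y_c; consequently there exists a subset T of S containing B with |T| ≤ 2r such that the restriction of M to T is courteously colored and has rank r. -/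
open Set

private lemma aux_biUnion_ncard {α C : Type*} (s : Finset C) (f : C → Set α)
    (hf : ∀ c ∈ s, (f c).Finite) :
    (⋃ c ∈ s, f c).ncard ≤ ∑ c ∈ s, (f c).ncard := by
  classical
  induction s using Finset.cons_induction with
  | empty => simp
  | cons a s ha ih =>
    rw [Finset.sum_cons]
    have : (⋃ c ∈ Finset.cons a s ha, f c) = f a ∪ ⋃ c ∈ s, f c := by
      simp [Set.iUnion_or, Set.iUnion_union_distrib]
    rw [this]
    exact (Set.ncard_union_le _ _).trans
      (by gcongr; exact ih fun c hc => hf c (Finset.mem_cons.2 (Or.inr hc)))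

/-- Let `M` be a courteously colored matroid of rank `r`, `B` a basis, and for each color `c`
let `y_c` be the number of elements of color `c` in `B`. Then for any `B ⊆ T ⊆ S` and any
color `c`, the rank of `T` minus the rank of the elements of `T` not colored `c` is at most
`y_c`; consequently there is `T ⊆ S` containing `B` with `|T| ≤ 2r` whose restriction is
courteously colored of rank `r`. -/
theorem stmt9 {α C : Type*} (M : Matroid α) (col : α → C) (r : ℕ) (hE : M.E.Finite)
    (hc : M.CourteouslyColored col)
    (B : Set α) (hB : M.IsBase B) (hBr : B.ncard = r) :
    (∀ T, B ⊆ T → T ⊆ M.E → ∀ c : C, ∀ I J : Set α,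
        M.IsBasis I T → M.IsBasis J {e ∈ T | col e ≠ c} →
        I.ncard - J.ncard ≤ (B ∩ {e | col e = c}).ncard) ∧
    ∃ T, B ⊆ T ∧ T ⊆ M.E ∧ T.ncard ≤ 2 * r ∧
      (M.restrict T).CourteouslyColored col ∧
      ∃ B', (M.restrict T).IsBase B' ∧ B'.ncard = r := by
  classical
  have hBE := hB.subset_ground
  have hBfin : B.Finite := hE.subset hBE
  constructor
  · intro T hBT hTE c I J hI hJ
    set D := B ∩ {e | col e = c} with hD
    have hDB : D ⊆ B := Set.inter_subset_left
    have hyr : D.ncard ≤ r := hBr ▸ Set.ncard_le_ncard hDB hBfin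
    -- I has size r
    have hBbT : M.IsBasis B T := Matroid.IsBase.isBasis_of_subset hTE hB hBT
    have hIr : I.ncard = r := by
      have := hI.encard_eq_encard hBbT
      rw [← hBr, Set.ncard_def, this, ← Set.ncard_def]
    -- B \ D is an independent subset of {e ∈ T | col e ≠ c}
    have hBD : (B \ D) ⊆ {e ∈ T | col e ≠ c} := by
      rintro e ⟨heB, heD⟩
      refine ⟨hBT heB, fun h => heD ⟨heB, h⟩⟩
    obtain ⟨J', hJ', hBDJ'⟩ := (hB.indep.subset Set.diff_subset).subset_isBasis_of_subset hBD
      (fun e he => hTE he.1)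
    have hJJ' : J.ncard = J'.ncard := by
      have := hJ.encard_eq_encard hJ'
      rw [Set.ncard_def, this, ← Set.ncard_def]
    have hle : (B \ D).ncard ≤ J'.ncard :=
      Set.ncard_le_ncard hBDJ' (hE.subset hJ'.indep.subset_ground)
    have hdiff : (B \ D).ncard = r - D.ncard := by
      rw [Set.ncard_diff hDB (hBfin.subset hDB), hBr]
    omega
  · -- construction of T
    choose A hA hAc using hc
    have hex : ∀ c : C, ∃ B', M.IsBase B' ∧ B \ {e | col e = c} ⊆ B' ∧
        B' ⊆ (B \ {e | col e = c}) ∪ A c :=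
      fun c => (hB.indep.subset Set.diff_subset).exists_isBase_subset_union_isBase (hA c)
    choose Bc hBc hBc1 hBc2 using hex
    have hBcavoid : ∀ c, ∀ e ∈ Bc c, col e ≠ c := by
      intro c e he
      rcases hBc2 c he with h | h
      · exact h.2
      · exact hAc c e h
    set S : Finset C := (hBfin.image col).toFinset with hS
    set T : Set α := B ∪ ⋃ c ∈ S, (Bc c \ B) with hT
    have hBT : B ⊆ T := Set.subset_union_left
    have hTE : T ⊆ M.E := by
      rintro e (he | he)
      · exact hBE he
      · simp only [Set.mem_iUnion] at he
        obtain ⟨c, _, he, -⟩ := he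
        exact (hBc c).subset_ground he
    have hBcfin : ∀ c, (Bc c).Finite := fun c => hE.subset (hBc c).subset_ground
    have hBcr : ∀ c, (Bc c).ncard = r := fun c => hBr ▸ (hBc c).ncard_eq_ncard_of_isBase hB
    refine ⟨T, hBT, hTE, ?_, ?_, B, ?_, hBr⟩
    · -- cardinality
      have h1 : T.ncard ≤ B.ncard + (⋃ c ∈ S, (Bc c \ B)).ncard := Set.ncard_union_le _ _
      have h2 : (⋃ c ∈ S, (Bc c \ B)).ncard ≤ ∑ c ∈ S, (Bc c \ B).ncard :=
        aux_biUnion_ncard S _ (fun c _ => (hBcfin c).subset Set.diff_subset)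
      have h3 : ∀ c ∈ S, (Bc c \ B).ncard ≤ (B ∩ {e | col e = c}).ncard := by
        intro c _
        have hsub : Bc c \ B ⊆ Bc c \ (B \ {e | col e = c}) := by
          rintro e ⟨he, heB⟩
          exact ⟨he, fun h => heB h.1⟩
        calc (Bc c \ B).ncard ≤ (Bc c \ (B \ {e | col e = c})).ncard :=
              Set.ncard_le_ncard hsub ((hBcfin c).subset Set.diff_subset)
          _ = (Bc c).ncard - (B \ {e | col e = c}).ncard :=
              Set.ncard_diff (hBc1 c) (hBfin.subset Set.diff_subset)
          _ ≤ (B ∩ {e | col e = c}).ncard := by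
              have h4 := Set.ncard_diff_add_ncard_of_subset
                (Set.inter_subset_left (s := B) (t := {e | col e = c})) hBfin
              rw [Set.diff_self_inter] at h4
              have h5 : (B \ {e | col e = c}).ncard ≤ r := hBr ▸ Set.ncard_le_ncard Set.diff_subset hBfin
              rw [hBcr c]
              omega
      have h3' : ∑ c ∈ S, (Bc c \ B).ncard ≤ ∑ c ∈ S, (B ∩ {e | col e = c}).ncard :=
        Finset.sum_le_sum h3
      have key : ∀ c : C, (B ∩ {e | col e = c}) =
          ↑(hBfin.toFinset.filter (fun a => col a = c)) := by
        intro c; ext e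
        simp [Set.Finite.mem_toFinset]
      have h4 : ∑ c ∈ S, (B ∩ {e | col e = c}).ncard = r := by
        simp_rw [key, Set.ncard_coe_finset]
        rw [← Finset.card_eq_sum_card_fiberwise (f := col) (fun x hx => by
          simp only [hS, Finset.mem_coe, Set.Finite.mem_toFinset, Set.mem_image]
          exact ⟨x, (Set.Finite.mem_toFinset hBfin).1 hx, rfl⟩)]
        rw [← Set.ncard_eq_toFinset_card B hBfin, hBr]
      have hBr' : B.ncard = r := hBr
      omega
    · -- courteous
      intro c
      by_cases hcS : c ∈ S
      · refine ⟨Bc c, ?_, hBcavoid c⟩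
        rw [Matroid.isBase_restrict_iff hTE]
        refine Matroid.IsBase.isBasis_of_subset hTE (hBc c) ?_
        intro e he
        by_cases heB : e ∈ B
        · exact hBT heB
        · exact Set.mem_union_right _ (Set.mem_biUnion hcS ⟨he, heB⟩)
      · refine ⟨B, ?_, fun e he hcol => hcS ?_⟩
        · rw [Matroid.isBase_restrict_iff hTE]
          exact Matroid.IsBase.isBasis_of_subset hTE hB hBT
        · simp only [hS, Set.Finite.mem_toFinset, Set.mem_image]
          exact ⟨e, he, hcol⟩
    · rw [Matroid.isBase_restrict_iff hTE]
      exact Matroid.IsBase.isBasis_of_subset hTE hB hBT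
end

section
/- If v is a cut-vertex in a vertex-color-avoiding connected graph G, then at most one connected component of G - v contains a vertex whose color differs from the color of v. -/
/-- The spanning subgraph obtained from `G` by removing all edges of color `c`. -/
def SimpleGraph.deleteColor {V C : Type*} (G : SimpleGraph V) (col : Sym2 V → C) (c : C) :
    SimpleGraph V :=
  G.deleteEdges {e | col e = c}

/-- An edge-colored graph is edge-color-avoiding connected if after removing the edges of any
single color it remains connected. -/
def EdgeColorAvoidingConnected {V C : Type*} (G : SimpleGraph V) (col : Sym2 V → C) : Prop :=
  ∀ c : C, (G.deleteColor col c).Connected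

/-- Vertices `u` and `v` are vertex-`c`-avoiding connected: there is a `u`-`v` walk, and either
one of `u`, `v` has color `c`, or some `u`-`v` walk contains no vertex of color `c`. -/
def VertexCAvoidingConnected {V C : Type*} (G : SimpleGraph V) (col : V → C) (c : C)
    (u v : V) : Prop :=
  G.Reachable u v ∧
    (col u = c ∨ col v = c ∨ ∃ p : G.Walk u v, ∀ w ∈ p.support, col w ≠ c)

/-- A vertex-colored graph is vertex-color-avoiding connected if any two vertices are
vertex-`c`-avoiding connected for every color `c`. -/
def VertexColorAvoidingConnected {V C : Type*} (G : SimpleGraph V) (col : V → C) : Prop :=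
  ∀ (c : C) (u v : V), VertexCAvoidingConnected G col c u v

/-- Vertices `u` and `v` are internally vertex-`c`-avoiding connected: there is a `u`-`v` walk
containing no internal vertices of color `c`. -/
def InternallyVertexCAvoidingConnected {V C : Type*} (G : SimpleGraph V) (col : V → C) (c : C)
    (u v : V) : Prop :=
  ∃ p : G.Walk u v, ∀ w ∈ p.support, w ≠ u → w ≠ v → col w ≠ c

/-- A vertex-colored graph is internally vertex-color-avoiding connected if any two vertices are
internally vertex-`c`-avoiding connected for every color `c`. -/
def InternallyVertexColorAvoidingConnected {V C : Type*} (G : SimpleGraph V) (col : V → C) :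
    Prop :=
  ∀ (c : C) (u v : V), InternallyVertexCAvoidingConnected G col c u v

lemma walk_avoid_reachable {V : Type*} {G : SimpleGraph V} {v : V} :
    ∀ {x y : V} (p : G.Walk x y), (∀ w ∈ p.support, w ≠ v) →
    ∀ (hx : x ≠ v) (hy : y ≠ v),
      (G.induce {u : V | u ≠ v}).Reachable ⟨x, hx⟩ ⟨y, hy⟩ := by
  intro x y p
  induction p with
  | nil => intro _ hx hy; rfl
  | @cons x z y hadj q ih =>
    intro hs hx hy
    have hz : z ≠ v := hs z (by simp [SimpleGraph.Walk.support_cons])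
    refine SimpleGraph.Reachable.trans ?_ (ih (fun w hw => hs w (by simp [SimpleGraph.Walk.support_cons, hw])) hz hy)
    exact SimpleGraph.Adj.reachable (by simpa using hadj)

/-- If `v` is a cut-vertex of a vertex-color-avoiding connected graph `G`, then at most one
connected component of `G - v` contains a vertex whose color differs from the color of `v`
(i.e. any two such vertices are connected in `G - v`). -/
theorem stmt10 {V C : Type*} (G : SimpleGraph V) (col : V → C)
    (h : VertexColorAvoidingConnected G col) (v : V)
    (hconn : G.Connected) (hcut : ¬ (G.induce {u : V | u ≠ v}).Connected)
    (a b : {u : V | u ≠ v}) (ha : col ↑a ≠ col v) (hb : col ↑b ≠ col v) :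
    (G.induce {u : V | u ≠ v}).Reachable a b := by
  obtain ⟨hr, hcase⟩ := h (col v) a b
  rcases hcase with hc | hc | ⟨p, hp⟩
  · exact absurd hc ha
  · exact absurd hc hb
  · have hsup : ∀ w ∈ p.support, w ≠ v := fun w hw hwv => hp w hw (by rw [hwv])
    exact walk_avoid_reachable p hsup a.2 b.2
end

section
/- Every vertex-color-avoiding connected graph on n vertices whose vertices are colored with exactly k ≥ 3 colors has at least n edges. -/
section Aux

open SimpleGraph Walk

private lemma aux_reach_del {V : Type*} {G : SimpleGraph V} {u v : V}
    (hr : (G \ SimpleGraph.fromEdgeSet {s(u, v)}).Reachable u v) :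
    ∀ {x y : V}, G.Walk x y → (G \ SimpleGraph.fromEdgeSet {s(u, v)}).Reachable x y := by
  intro x y p
  induction p with
  | nil => exact Reachable.refl _
  | @cons a b c hab p ih =>
    refine Reachable.trans ?_ ih
    by_cases he : s(a, b) = s(u, v)
    · rw [Sym2.eq_iff] at he
      rcases he with ⟨rfl, rfl⟩ | ⟨rfl, rfl⟩
      · exact hr
      · exact hr.symm
    · refine SimpleGraph.Adj.reachable ?_
      rw [SimpleGraph.sdiff_adj]
      refine ⟨hab, ?_⟩
      rw [SimpleGraph.fromEdgeSet_adj]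
      simp [he]

private lemma aux_tree_card {V : Type*} [Fintype V] {G : SimpleGraph V} (h : G.IsTree) :
    G.edgeSet.ncard + 1 = Fintype.card V := by
  classical
  haveI : Fintype G.edgeSet := (Set.toFinite _).fintype
  have := h.card_edgeFinset
  rwa [Set.ncard_eq_toFinset_card']

private lemma aux_not_acyclic {V : Type*} [Fintype V] {G : SimpleGraph V} (hc : G.Connected)
    (ha : ¬ G.IsAcyclic) :
    ∃ G' : SimpleGraph V, G'.Connected ∧ G'.edgeSet.ncard + 1 = G.edgeSet.ncard := by
  classical
  rw [SimpleGraph.isAcyclic_iff_forall_adj_isBridge] at ha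
  push_neg at ha
  obtain ⟨a, b, hab, hbr⟩ := ha
  rw [SimpleGraph.isBridge_iff] at hbr
  have hre : (G \ SimpleGraph.fromEdgeSet {s(a, b)}).Reachable a b := by
    by_contra hre; exact hbr hre
  refine ⟨G \ SimpleGraph.fromEdgeSet {s(a, b)}, ?_, ?_⟩
  · haveI : Nonempty V := hc.nonempty
    exact SimpleGraph.Connected.mk (fun x y => aux_reach_del hre ((hc.preconnected x y).some))
  · have hE : (G \ SimpleGraph.fromEdgeSet {s(a, b)}).edgeSet = G.edgeSet \ {s(a, b)} := by
      rw [SimpleGraph.edgeSet_sdiff, SimpleGraph.edgeSet_fromEdgeSet,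
        SimpleGraph.edgeSet_sdiff_sdiff_isDiag]
    have hmem : s(a, b) ∈ G.edgeSet := hab
    rw [hE, Set.ncard_diff_singleton_of_mem hmem]
    have : 1 ≤ G.edgeSet.ncard := by
      rw [Nat.one_le_iff_ne_zero]
      intro h0
      have := (Set.ncard_eq_zero (Set.toFinite _)).mp h0 ▸ hmem
      simp at this
    omega

private lemma aux_conn_card {V : Type*} [Fintype V] :
    ∀ (n : ℕ) (G : SimpleGraph V), G.Connected → G.edgeSet.ncard ≤ n →
      Fintype.card V ≤ n + 1 := by
  intro n
  induction n with
  | zero =>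
    intro G hc hn
    by_cases ha : G.IsAcyclic
    · have := aux_tree_card ⟨hc, ha⟩
      omega
    · obtain ⟨G', _, hcard⟩ := aux_not_acyclic hc ha
      omega
  | succ n ih =>
    intro G hc hn
    by_cases ha : G.IsAcyclic
    · have := aux_tree_card ⟨hc, ha⟩
      omega
    · obtain ⟨G', hc', hcard⟩ := aux_not_acyclic hc ha
      have := ih G' hc' (by omega)
      omega

private lemma aux_adj_pair {V C : Type*} {G : SimpleGraph V} (col : V → C) :
    ∀ {a b : V}, G.Walk a b → col a ≠ col b →
      ∃ u v, G.Adj u v ∧ col u ≠ col v := by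
  intro a b p
  induction p with
  | nil => intro hne; exact absurd rfl hne
  | @cons a b c hab p ih =>
    intro hne
    by_cases hcab : col a = col b
    · exact ih (hcab ▸ hne)
    · exact ⟨a, b, hab, hcab⟩

end Aux

/-- Every vertex-color-avoiding connected graph on `n` vertices whose vertices are colored with
exactly `k ≥ 3` colors has at least `n` edges. -/
theorem stmt11 {V C : Type*} [Fintype V] (G : SimpleGraph V) (col : V → C) (k : ℕ)
    (hk : 3 ≤ k) (hcols : (Set.range col).ncard = k)
    (h : VertexColorAvoidingConnected G col) :
    Fintype.card V ≤ G.edgeSet.ncard := by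
  classical
  have hfin : (Set.range col).Finite := Set.finite_range col
  have hcard : 3 ≤ hfin.toFinset.card := by
    rw [← Set.ncard_eq_toFinset_card _ hfin, hcols]; exact hk
  obtain ⟨c1, hc1⟩ : hfin.toFinset.Nonempty := Finset.card_pos.mp (by omega)
  obtain ⟨c2, hc2⟩ : (hfin.toFinset.erase c1).Nonempty := Finset.card_pos.mp (by
    rw [Finset.card_erase_of_mem hc1]; omega)
  obtain ⟨c3, hc3⟩ : ((hfin.toFinset.erase c1).erase c2).Nonempty := Finset.card_pos.mp (by
    rw [Finset.card_erase_of_mem hc2, Finset.card_erase_of_mem hc1]; omega)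
  have d21 : c2 ≠ c1 := (Finset.mem_erase.mp hc2).1
  have d32 : c3 ≠ c2 := (Finset.mem_erase.mp hc3).1
  have d31 : c3 ≠ c1 := (Finset.mem_erase.mp (Finset.mem_erase.mp hc3).2).1
  have hc2' : c2 ∈ hfin.toFinset := (Finset.mem_erase.mp hc2).2
  have hc3' : c3 ∈ hfin.toFinset := (Finset.mem_erase.mp (Finset.mem_erase.mp hc3).2).2
  obtain ⟨x1, hx1⟩ : ∃ x, col x = c1 := hfin.mem_toFinset.mp hc1
  obtain ⟨x2, hx2⟩ : ∃ x, col x = c2 := hfin.mem_toFinset.mp hc2'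
  obtain ⟨x3, hx3⟩ : ∃ x, col x = c3 := hfin.mem_toFinset.mp hc3'
  haveI : Nonempty V := ⟨x1⟩
  have hconn : G.Connected := SimpleGraph.Connected.mk (fun u v => (h c1 u v).1)
  by_cases ha : G.IsAcyclic
  · exfalso
    -- `G` is a tree; derive a contradiction from the three colors
    obtain ⟨u, v, huv, hcuv⟩ : ∃ u v, G.Adj u v ∧ col u ≠ col v :=
      aux_adj_pair col ((h c1 x1 x2).1.some)
        (by rw [hx1, hx2]; exact fun e => d21 e.symm)
    have hex : ∃ x : V, col x ≠ col u ∧ col x ≠ col v := by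
      by_cases e1u : c1 = col u
      · by_cases e2v : c2 = col v
        · exact ⟨x3, by rw [hx3, ← e1u]; exact d31, by rw [hx3, ← e2v]; exact d32⟩
        · by_cases e2u : c2 = col u
          · exact absurd (e2u.trans e1u.symm) d21
          · exact ⟨x2, by rw [hx2]; exact e2u, by rw [hx2]; exact e2v⟩
      · by_cases e1v : c1 = col v
        · by_cases e2u : c2 = col u
          · refine ⟨x3, ?_, ?_⟩
            · rw [hx3]; intro e3u; exact d32 (e3u.trans e2u.symm)
            · rw [hx3, ← e1v]; exact d31
          · refine ⟨x2, by rw [hx2]; exact e2u, by rw [hx2, ← e1v]; exact d21⟩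
        · exact ⟨x1, by rw [hx1]; exact e1u, by rw [hx1]; exact e1v⟩
    obtain ⟨x, hxu, hxv⟩ := hex
    obtain ⟨q0⟩ := hconn.preconnected x u
    have hq : q0.bypass.IsPath := q0.bypass_isPath
    by_cases hv : v ∈ q0.bypass.support
    · -- every walk from x to u passes through v
      rcases (h (col v) x u).2 with h1 | h1 | ⟨w, hw⟩
      · exact hxv h1
      · exact hcuv h1
      · have heq : w.bypass = q0.bypass :=
          congrArg Subtype.val (ha.path_unique ⟨w.bypass, w.bypass_isPath⟩ ⟨q0.bypass, hq⟩)
        have hvw : v ∈ w.bypass.support := by rw [heq]; exact hv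
        exact hw v (w.support_bypass_subset hvw) rfl
    · -- extend the path to v; then every walk from x to v passes through u
      have hP : (SimpleGraph.Walk.cons huv.symm q0.bypass.reverse).IsPath := by
        rw [SimpleGraph.Walk.cons_isPath_iff]
        refine ⟨hq.reverse, ?_⟩
        rwa [SimpleGraph.Walk.support_reverse, List.mem_reverse]
      rcases (h (col u) x v).2 with h1 | h1 | ⟨w, hw⟩
      · exact hxu h1
      · exact hcuv h1.symm
      · have hPr : (SimpleGraph.Walk.cons huv.symm q0.bypass.reverse).reverse.IsPath :=
          hP.reverse
        have heq : w.bypass = (SimpleGraph.Walk.cons huv.symm q0.bypass.reverse).reverse :=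
          congrArg Subtype.val (ha.path_unique ⟨w.bypass, w.bypass_isPath⟩ ⟨_, hPr⟩)
        have hmem : u ∈ q0.bypass.support := q0.bypass.end_mem_support
        have huw : u ∈ w.bypass.support := by
          rw [heq]
          simp only [SimpleGraph.Walk.support_reverse, SimpleGraph.Walk.support_cons,
            List.mem_reverse, List.mem_cons]
          tauto
        exact hw u (w.support_bypass_subset huw) rfl
  · -- `G` has a cycle: delete a non-bridge edge and count
    obtain ⟨G', hc', hcard'⟩ := aux_not_acyclic hconn ha
    have := aux_conn_card (G.edgeSet.ncard - 1) G' hc' (by omega)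
    omega
end

section
/- For all n ≥ k ≥ 3, the n-cycle v_1 v_2 ... v_n with vertex v_i colored i for i ≤ k and colored k for i > k is vertex-color-avoiding connected; hence the minimum number of edges of a vertex-color-avoiding connected graph on n vertices colored with exactly k ≥ 3 colors equals n. -/
open SimpleGraph

private lemma reach_del {V : Type} {G : SimpleGraph V} {u v : V}
    (h : (G \ SimpleGraph.fromEdgeSet {s(u,v)}).Reachable u v) {a b : V}
    (hr : G.Reachable a b) : (G \ SimpleGraph.fromEdgeSet {s(u,v)}).Reachable a b := by
  obtain ⟨p⟩ := hr
  induction p with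
  | nil => exact Reachable.refl _
  | @cons a c b hadj p ih =>
    refine Reachable.trans ?_ ih
    by_cases he : s(a, c) = s(u, v)
    · rw [Sym2.eq_iff] at he
      rcases he with ⟨rfl, rfl⟩ | ⟨rfl, rfl⟩
      · exact h
      · exact h.symm
    · exact SimpleGraph.Adj.reachable (by simp [SimpleGraph.sdiff_adj, hadj, SimpleGraph.fromEdgeSet_adj, he])

private lemma exists_del {V : Type} {G : SimpleGraph V} (hc : G.Connected) (hA : ¬ G.IsAcyclic) :
    ∃ e ∈ G.edgeSet, (G.deleteEdges {e}).Connected := by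
  rw [SimpleGraph.IsAcyclic] at hA
  push_neg at hA
  obtain ⟨v, c, hcy⟩ := hA
  have hne : c.edges ≠ [] := by
    have h3 := hcy.three_le_length
    intro h
    rw [← SimpleGraph.Walk.length_edges, h] at h3
    simp at h3
  obtain ⟨e, he⟩ : ∃ e, e ∈ c.edges := ⟨c.edges.head hne, List.head_mem hne⟩
  have heG : e ∈ G.edgeSet := c.edges_subset_edgeSet he
  refine ⟨e, heG, ?_⟩
  obtain ⟨u, w, rfl⟩ : ∃ u w, e = s(u, w) := Sym2.ind (fun u w => ⟨u, w, rfl⟩) e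
  have hreach : (G \ SimpleGraph.fromEdgeSet {s(u,w)}).Reachable u w :=
    (SimpleGraph.adj_and_reachable_delete_edges_iff_exists_cycle.mpr ⟨v, c, hcy, he⟩).2
  haveI := hc.nonempty
  exact SimpleGraph.Connected.mk (fun a b => reach_del hreach (hc.preconnected a b))

private lemma conn_card_le (m : ℕ) : ∀ (V : Type) [Fintype V] (G : SimpleGraph V),
    G.edgeSet.ncard = m → G.Connected → Fintype.card V - 1 ≤ m := by
  induction m using Nat.strong_induction_on with
  | _ m ih =>
  intro V _ G hm hc
  classical
  by_cases hA : G.IsAcyclic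
  · have ht : G.IsTree := ⟨hc, hA⟩
    have hcard := ht.card_edgeFinset
    have : G.edgeSet.ncard = G.edgeFinset.card := by
      rw [SimpleGraph.edgeFinset, Set.ncard_eq_toFinset_card']
    omega
  · obtain ⟨e, heG, hc'⟩ := exists_del hc hA
    have hE : (G.deleteEdges {e}).edgeSet = G.edgeSet \ {e} := by
      rw [SimpleGraph.edgeSet_deleteEdges]
    have hpos : 0 < m := by
      rw [← hm]
      exact (Set.ncard_pos (G.edgeSet.toFinite)).mpr ⟨e, heG⟩
    have hm' : (G.deleteEdges {e}).edgeSet.ncard = m - 1 := by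
      rw [hE, Set.ncard_diff_singleton_of_mem heG, hm]
    have := ih (m - 1) (by omega) V (G.deleteEdges {e}) hm' hc'
    omega

private lemma conn_tree {V : Type} [Fintype V] {G : SimpleGraph V} (hc : G.Connected)
    (hm : G.edgeSet.ncard + 1 ≤ Fintype.card V) : G.IsTree := by
  refine ⟨hc, ?_⟩
  by_contra hA
  obtain ⟨e, heG, hc'⟩ := exists_del hc hA
  have hpos : 0 < G.edgeSet.ncard :=
    (Set.ncard_pos (G.edgeSet.toFinite)).mpr ⟨e, heG⟩
  have hm' : (G.deleteEdges {e}).edgeSet.ncard = G.edgeSet.ncard - 1 := by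
    rw [SimpleGraph.edgeSet_deleteEdges, Set.ncard_diff_singleton_of_mem heG]
  have h1 := conn_card_le _ V (G.deleteEdges {e}) hm' hc'
  have h2 := conn_card_le _ V G rfl hc
  omega

private lemma flip_lemma {V : Type} {G : SimpleGraph V} (S : V → Prop) :
    ∀ {a b : V} (p : G.Walk a b), S a → ¬ S b →
      ∃ u v, G.Adj u v ∧ u ∈ p.support ∧ v ∈ p.support ∧ S u ∧ ¬ S v := by
  intro a b p
  induction p with
  | nil => intro h1 h2; exact absurd h1 h2
  | @cons a c b hadj p ih =>
    intro h1 h2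
    by_cases hc : S c
    · obtain ⟨u, v, h⟩ := ih hc h2
      exact ⟨u, v, h.1, by simp [h.2.1], by simp [h.2.2.1], h.2.2.2⟩
    · exact ⟨a, c, hadj, by simp, by simp, h1, hc⟩

private lemma tree_not_vcac {V C : Type} {G : SimpleGraph V} (ht : G.IsTree) {col : V → C}
    {x y m : V} (hxy : col x ≠ col y) (hxm : col x ≠ col m) (hym : col y ≠ col m)
    (h : VertexColorAvoidingConnected G col) : False := by
  classical
  have hA := ht.IsAcyclic
  have key : ∀ {a b t : V} (P : G.Walk a b), P.IsPath → t ∈ P.support →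
      ∀ (q : G.Walk a b), t ∈ q.support := by
    intro a b t P hP htP q
    have h1 := hA.path_unique ⟨q.bypass, q.bypass_isPath⟩ ⟨P, hP⟩
    have h2 : q.bypass = P := congrArg Subtype.val h1
    exact q.support_bypass_subset (h2 ▸ htP)
  obtain ⟨p, hpav⟩ := ((h (col m) x y).2.resolve_left hxm).resolve_left hym
  obtain ⟨q, hqav⟩ := ((h (col y) x m).2.resolve_left hxy).resolve_left (Ne.symm hym)
  obtain ⟨r, hrav⟩ := ((h (col x) y m).2.resolve_left (Ne.symm hxy)).resolve_left (Ne.symm hxm)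
  set p' := p.bypass with hp'def
  set q' := q.bypass with hq'def
  set r' := r.bypass with hr'def
  have hpav' : ∀ w ∈ p'.support, col w ≠ col m := fun w hw => hpav w (p.support_bypass_subset hw)
  have hqav' : ∀ w ∈ q'.support, col w ≠ col y := fun w hw => hqav w (q.support_bypass_subset hw)
  have hrav' : ∀ w ∈ r'.support, col w ≠ col x := fun w hw => hrav w (r.support_bypass_subset hw)
  have hyq' : y ∉ q'.support := fun hw => hqav' y hw rfl
  -- p'.support ⊆ q'.support ∪ r'.support
  have hsub : ∀ t ∈ p'.support, t ∈ q'.support ∨ t ∈ r'.support := by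
    intro t htp
    have hW : (q'.append r'.reverse).bypass = p' := by
      have h1 := hA.path_unique ⟨(q'.append r'.reverse).bypass, Walk.bypass_isPath _⟩
        ⟨p', p.bypass_isPath⟩
      exact congrArg Subtype.val h1
    have : t ∈ (q'.append r'.reverse).support :=
      (q'.append r'.reverse).support_bypass_subset (hW ▸ htp)
    rw [Walk.mem_support_append_iff] at this
    rcases this with h1 | h1
    · exact Or.inl h1
    · right; rwa [Walk.support_reverse, List.mem_reverse] at h1
  by_cases hcom : ∃ t, t ∈ p'.support ∧ t ∈ q'.support ∧ t ∈ r'.support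
  · obtain ⟨t, htp, htq, htr⟩ := hcom
    have h1 : col x ≠ col t := fun hh => hrav' t htr hh.symm
    have h2 : col y ≠ col t := fun hh => hqav' t htq hh.symm
    obtain ⟨s, hsav⟩ := ((h (col t) x y).2.resolve_left h1).resolve_left h2
    exact hsav t (key p' p.bypass_isPath htp s) rfl
  · push_neg at hcom
    obtain ⟨a, b, hadj, hap, hbp, haq, hbq⟩ :=
      flip_lemma (· ∈ q'.support) p' q'.start_mem_support hyq'
    have hbr : b ∈ r'.support := (hsub b hbp).resolve_left hbq
    have har : a ∉ r'.support := hcom a hap haq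
    have path2 : (Walk.cons hadj (r'.dropUntil b hbr)).IsPath := by
      rw [Walk.cons_isPath_iff]
      exact ⟨(r.bypass_isPath).dropUntil hbr, fun hmem => har (r'.support_dropUntil_subset hbr hmem)⟩
    have path1 : (q'.dropUntil a haq).IsPath := (q.bypass_isPath).dropUntil haq
    have heq : q'.dropUntil a haq = Walk.cons hadj (r'.dropUntil b hbr) := by
      have h1 := hA.path_unique ⟨q'.dropUntil a haq, path1⟩ ⟨Walk.cons hadj (r'.dropUntil b hbr), path2⟩
      exact congrArg Subtype.val h1
    have : b ∈ (q'.dropUntil a haq).support := by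
      rw [heq, Walk.support_cons]
      exact List.mem_cons_of_mem _ (Walk.start_mem_support _)
    exact hbq (q'.support_dropUntil_subset haq this)

private lemma lower_bound {V C : Type} [Fintype V] {G : SimpleGraph V} {col : V → C}
    (hk3 : 3 ≤ (Set.range col).ncard) (h : VertexColorAvoidingConnected G col) :
    Fintype.card V ≤ G.edgeSet.ncard := by
  obtain ⟨c1, hc1, c2, hc2, c3, hc3, h12, h13, h23⟩ :=
    (Set.two_lt_ncard (Set.finite_range col)).mp (by omega)
  obtain ⟨x, rfl⟩ := hc1
  obtain ⟨y, rfl⟩ := hc2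
  obtain ⟨m, rfl⟩ := hc3
  haveI : Nonempty V := ⟨x⟩
  have hc : G.Connected := SimpleGraph.Connected.mk (fun a b => (h (col x) a b).1)
  by_contra hlt
  have htree : G.IsTree := conn_tree hc (by omega)
  exact tree_not_vcac htree h12 h13 h23 h

private lemma cyc_adj_succ {m : ℕ} {a b : Fin (m+3)} (h : b.val = a.val + 1) :
    (SimpleGraph.cycleGraph (m+3)).Adj a b := by
  rw [SimpleGraph.cycleGraph_adj']
  right
  rw [Fin.sub_def]
  simp only
  have h1 : (m+3) - a.val + b.val = (m+3) + 1 := by omega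
  rw [h1, Nat.add_mod_left, Nat.mod_eq_of_lt (by omega)]

private lemma cyc_adj_wrap {m : ℕ} :
    (SimpleGraph.cycleGraph (m+3)).Adj (⟨0, by omega⟩ : Fin (m+3)) ⟨m+2, by omega⟩ := by
  rw [SimpleGraph.cycleGraph_adj']
  left
  rw [Fin.sub_def]
  simp only
  have h1 : m + 3 - (m + 2) + 0 = 1 := by omega
  rw [h1, Nat.mod_eq_of_lt (by omega)]

private lemma seg_walk {m : ℕ} : ∀ (d : ℕ) (a b : Fin (m+3)), b.val = a.val + d →
    ∃ p : (SimpleGraph.cycleGraph (m+3)).Walk a b,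
      ∀ w ∈ p.support, a.val ≤ w.val ∧ w.val ≤ b.val := by
  intro d
  induction d with
  | zero =>
    intro a b hb
    have hab : a = b := Fin.ext (by omega)
    subst hab
    exact ⟨SimpleGraph.Walk.nil, by simp⟩
  | succ d ih =>
    intro a b hb
    have hd : a.val + d < m+3 := by omega
    obtain ⟨p, hp⟩ := ih a ⟨a.val + d, hd⟩ rfl
    refine ⟨p.concat (cyc_adj_succ (by simp [hb]; omega)), ?_⟩
    intro w hw
    rw [SimpleGraph.Walk.support_concat, List.mem_append] at hw
    rcases hw with hw | hw
    · have := hp w hw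
      simp only at this
      omega
    · rw [List.mem_singleton] at hw
      subst hw
      omega

private lemma seg_walk' {m : ℕ} (a b : Fin (m+3)) (hab : a.val ≤ b.val) :
    ∃ p : (SimpleGraph.cycleGraph (m+3)).Walk a b,
      ∀ w ∈ p.support, a.val ≤ w.val ∧ w.val ≤ b.val :=
  seg_walk (b.val - a.val) a b (by omega)

private lemma seg_walk_any {m : ℕ} (a b : Fin (m+3)) :
    ∃ p : (SimpleGraph.cycleGraph (m+3)).Walk a b,
      ∀ w ∈ p.support, min a.val b.val ≤ w.val ∧ w.val ≤ max a.val b.val := by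
  rcases le_total a.val b.val with hab | hab
  · obtain ⟨p, hp⟩ := seg_walk' a b hab
    exact ⟨p, fun w hw => by have := hp w hw; omega⟩
  · obtain ⟨p, hp⟩ := seg_walk' b a hab
    refine ⟨p.reverse, fun w hw => ?_⟩
    rw [SimpleGraph.Walk.support_reverse, List.mem_reverse] at hw
    have := hp w hw
    omega

private lemma mixed_walk {m c : ℕ} (u v : Fin (m+3)) (h1 : u.val < c) (h2 : c < v.val) :
    ∃ p : (SimpleGraph.cycleGraph (m+3)).Walk u v, ∀ w ∈ p.support, w.val ≠ c := by
  obtain ⟨p1, hp1⟩ := seg_walk' ⟨0, by omega⟩ u (Nat.zero_le _)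
  obtain ⟨p2, hp2⟩ := seg_walk' v ⟨m+2, by omega⟩ (Nat.lt_succ_iff.mp v.isLt)
  refine ⟨p1.reverse.append (SimpleGraph.Walk.cons cyc_adj_wrap p2.reverse), ?_⟩
  intro w hw
  rw [SimpleGraph.Walk.mem_support_append_iff] at hw
  rcases hw with hw | hw
  · rw [SimpleGraph.Walk.support_reverse, List.mem_reverse] at hw
    have := (hp1 w hw).2
    omega
  · rw [SimpleGraph.Walk.support_cons, List.mem_cons] at hw
    rcases hw with rfl | hw
    · show (0:ℕ) ≠ c
      omega
    · rw [SimpleGraph.Walk.support_reverse, List.mem_reverse] at hw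
      have := (hp2 w hw).1
      omega
private lemma cycle_vcac {m k : ℕ} (hk : 3 ≤ k) (hkn : k ≤ m+3) :
    VertexColorAvoidingConnected (SimpleGraph.cycleGraph (m+3))
      (fun i : Fin (m+3) => min i.val (k-1)) := by
  intro c u v
  constructor
  · exact SimpleGraph.cycleGraph_preconnected u v
  by_cases hu : min u.val (k-1) = c
  · exact Or.inl hu
  by_cases hv : min v.val (k-1) = c
  · exact Or.inr (Or.inl hv)
  refine Or.inr (Or.inr ?_)
  by_cases hcex : c ≤ k - 1
  · rcases Nat.lt_or_ge c (k-1) with hclt | hceq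
    · -- c < k-1 : only the vertex with value c has color c
      have hu' : u.val ≠ c := fun h => hu (by omega)
      have hv' : v.val ≠ c := fun h => hv (by omega)
      rcases Nat.lt_or_ge u.val c with hu2 | hu2 <;> rcases Nat.lt_or_ge v.val c with hv2 | hv2
      · obtain ⟨p, hp⟩ := seg_walk_any u v
        exact ⟨p, fun w hw => by have := hp w hw; show min w.val (k-1) ≠ c; omega⟩
      · obtain ⟨p, hp⟩ := mixed_walk u v hu2 (by omega)
        exact ⟨p, fun w hw => by have := hp w hw; show min w.val (k-1) ≠ c; omega⟩
      · obtain ⟨p, hp⟩ := mixed_walk v u hv2 (by omega)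
        refine ⟨p.reverse, fun w hw => ?_⟩
        rw [SimpleGraph.Walk.support_reverse, List.mem_reverse] at hw
        have := hp w hw
        show min w.val (k-1) ≠ c
        omega
      · obtain ⟨p, hp⟩ := seg_walk_any u v
        exact ⟨p, fun w hw => by have := hp w hw; show min w.val (k-1) ≠ c; omega⟩
    · -- c = k-1 : both endpoints have value < k-1
      have hu' : u.val < k - 1 := by omega
      have hv' : v.val < k - 1 := by omega
      obtain ⟨p, hp⟩ := seg_walk_any u v
      exact ⟨p, fun w hw => by have := hp w hw; show min w.val (k-1) ≠ c; omega⟩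
  · -- no vertex of color c
    obtain ⟨p⟩ := SimpleGraph.cycleGraph_preconnected u v
    exact ⟨p, fun w _ => by show min w.val (k-1) ≠ c; omega⟩

private lemma cycle_edge_card {m : ℕ} :
    (SimpleGraph.cycleGraph (m+3)).edgeSet.ncard = m+3 := by
  classical
  have hdeg := SimpleGraph.sum_degrees_eq_twice_card_edges (SimpleGraph.cycleGraph (m+3))
  have hd : ∀ v : Fin (m+3), (SimpleGraph.cycleGraph (m+3)).degree v = 2 := fun v =>
    SimpleGraph.cycleGraph_degree_three_le
  rw [Finset.sum_congr rfl (fun v _ => hd v)] at hdeg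
  rw [Finset.sum_const, Finset.card_univ, Fintype.card_fin, smul_eq_mul] at hdeg
  have hn : (SimpleGraph.cycleGraph (m+3)).edgeSet.ncard =
      (SimpleGraph.cycleGraph (m+3)).edgeFinset.card := by
    rw [SimpleGraph.edgeFinset, Set.ncard_eq_toFinset_card']
  omega

private lemma range_card {m k : ℕ} (hk : 3 ≤ k) (hkn : k ≤ m+3) :
    (Set.range fun i : Fin (m+3) => min i.val (k-1)).ncard = k := by
  have hr : (Set.range fun i : Fin (m+3) => min i.val (k-1)) = ↑(Finset.range k) := by
    ext j
    simp only [Set.mem_range, Finset.coe_range, Set.mem_Iio]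
    constructor
    · rintro ⟨i, rfl⟩
      omega
    · intro hj
      refine ⟨⟨j, by omega⟩, ?_⟩
      show min j (k-1) = j
      omega
  rw [hr, Set.ncard_coe_finset, Finset.card_range]

/-- For all `n ≥ k ≥ 3`, the `n`-cycle with vertex `v_i` colored `min i (k-1)` (i.e. colored
`i` for the first `k-1` vertices and with the last color afterwards) is vertex-color-avoiding
connected, uses exactly `k` colors and has `n` edges; hence, the minimum number of edges of a
vertex-color-avoiding connected graph on `n` vertices colored with exactly `k ≥ 3` colors
equals `n`. -/
theorem stmt12 (n k : ℕ) (hk : 3 ≤ k) (hkn : k ≤ n) :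
    (VertexColorAvoidingConnected (SimpleGraph.cycleGraph n)
        (fun i : Fin n => min i.val (k - 1)) ∧
      (Set.range fun i : Fin n => min i.val (k - 1)).ncard = k ∧
      (SimpleGraph.cycleGraph n).edgeSet.ncard = n) ∧
    ∀ (V C : Type) [Fintype V], Fintype.card V = n →
      ∀ (G : SimpleGraph V) (col : V → C), (Set.range col).ncard = k →
        VertexColorAvoidingConnected G col → n ≤ G.edgeSet.ncard := by
  obtain ⟨m, rfl⟩ : ∃ m, n = m + 3 := ⟨n - 3, by omega⟩
  refine ⟨⟨cycle_vcac hk hkn, range_card hk hkn, cycle_edge_card⟩, ?_⟩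
  intro V C _ hcard G col hcol hvcac
  have hlb := lower_bound (G := G) (col := col) (by rw [hcol]; exact hk) hvcac
  rw [← hcard]
  exact hlb
end

section
/- Let G be an internally vertex-color-avoiding connected graph on n vertices colored with exactly k ≥ 2 colors, and let x be the number of edges of G whose two endpoints have the same color. Then (k-2)·|E(G)| ≥ (k-1)n - k - x. -/
open SimpleGraph Finset

private lemma preconn_mono {W : Type*} {H H' : SimpleGraph W}
    (hadj : ∀ a b, H.Adj a b → H'.Reachable a b) (hp : H.Preconnected) : H'.Preconnected := by
  intro a b
  obtain ⟨p⟩ := hp a b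
  induction p with
  | nil => exact Reachable.refl _
  | cons h q ih => exact (hadj _ _ h).trans ih

private lemma conn_card_le_s14 {W : Type*} [Fintype W] :
    ∀ (m : ℕ) (H : SimpleGraph W), H.edgeSet.ncard = m → H.Connected →
      Fintype.card W ≤ m + 1 := by
  intro m
  induction m using Nat.strong_induction_on with
  | _ m ih =>
    intro H hm hc
    classical
    by_cases hac : H.IsAcyclic
    · have ht : H.IsTree := ⟨hc, hac⟩
      haveI : Fintype H.edgeSet := Fintype.ofFinite _
      have h1 := ht.card_edgeFinset
      have h2 : H.edgeSet.ncard = H.edgeFinset.card := Set.ncard_eq_toFinset_card' _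
      omega
    · simp only [IsAcyclic, not_forall, not_not] at hac
      obtain ⟨v, c, hcyc⟩ := hac
      cases c with
      | nil => exact absurd hcyc (Walk.IsCycle.not_of_nil)
      | @cons _ b _ hvb q =>
        have hreach : (H \ fromEdgeSet {s(v, b)}).Reachable v b :=
          ((adj_and_reachable_delete_edges_iff_exists_cycle).2
            ⟨v, Walk.cons hvb q, hcyc, by simp⟩).2
        set H' := H \ fromEdgeSet {s(v, b)} with hH'
        have hconn : H'.Connected := by
          haveI := hc.nonempty
          refine Connected.mk (preconn_mono ?_ hc.preconnected)
          intro a b' hab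
          by_cases he : s(a, b') = s(v, b)
          · rw [Sym2.eq_iff] at he
            rcases he with ⟨rfl, rfl⟩ | ⟨rfl, rfl⟩
            · exact hreach
            · exact hreach.symm
          · exact Adj.reachable (by simp [hH', sdiff_adj, fromEdgeSet_adj, he, hab])
        have hedge : H'.edgeSet = H.edgeSet \ {s(v, b)} := by
          simp [hH', edgeSet_sdiff, edgeSet_fromEdgeSet, edgeSet_sdiff_sdiff_isDiag]
        have hmem : s(v, b) ∈ H.edgeSet := hvb
        have hm1 : 1 ≤ m := by
          have := (Set.ncard_pos (Set.toFinite _)).2 ⟨_, hmem⟩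
          omega
        have hcard : H'.edgeSet.ncard = m - 1 := by
          rw [hedge, Set.ncard_diff_singleton_of_mem hmem, hm]
        have := ih (m - 1) (by omega) H' hcard hconn
        omega





private lemma reach_induce {V : Type*} {G : SimpleGraph V} {s : Set V} :
    ∀ {u v : V} (p : G.Walk u v), (∀ w ∈ p.support, w ∈ s) →
      ∀ (hu : u ∈ s) (hv : v ∈ s), (G.induce s).Reachable ⟨u, hu⟩ ⟨v, hv⟩ := by
  intro u v p
  induction p with
  | nil => intro _ hu hv; exact Reachable.refl _
  | @cons a b d hab q ih =>
    intro hsup hu hv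
    have hb : b ∈ s := hsup b (by simp)
    have hadj : (G.induce s).Adj ⟨a, hu⟩ ⟨b, hb⟩ := by
      simp only [comap_adj, Function.Embedding.coe_subtype]
      exact hab
    exact hadj.reachable.trans (ih (fun w hw => hsup w (by simp [hw])) hb hv)

private lemma color_bound {V C : Type*} [Fintype V] (G : SimpleGraph V) (col : V → C) (c : C)
    (h : ∀ u v, InternallyVertexCAvoidingConnected G col c u v) :
    Nat.card {v : V | col v ≠ c} ≤ {e ∈ G.edgeSet | ∀ v ∈ e, col v ≠ c}.ncard + 1 := by
  classical
  set s : Set V := {v | col v ≠ c} with hs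
  by_cases hne : Nonempty s
  · have hconn : (G.induce s).Connected := by
      refine Connected.mk ?_
      rintro ⟨u, hu⟩ ⟨v, hv⟩
      obtain ⟨p, hp⟩ := h u v
      refine reach_induce p ?_ hu hv
      intro w hw
      by_cases hwu : w = u
      · subst hwu; exact hu
      by_cases hwv : w = v
      · subst hwv; exact hv
      exact hp w hw hwu hwv
    haveI : Fintype s := Fintype.ofFinite _
    have h1 : Fintype.card s ≤ (G.induce s).edgeSet.ncard + 1 :=
      conn_card_le_s14 _ _ rfl hconn
    have himg : (Sym2.map (Subtype.val : s → V)) '' (G.induce s).edgeSet ⊆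
        {e ∈ G.edgeSet | ∀ v ∈ e, col v ≠ c} := by
      rintro e ⟨e', he', rfl⟩
      induction e' using Sym2.ind with
      | _ a b =>
        have hab : G.Adj (a : V) (b : V) := he'
        refine ⟨hab, ?_⟩
        intro v hv
        rw [Sym2.map_pair_eq, Sym2.mem_iff] at hv
        rcases hv with rfl | rfl
        · exact a.2
        · exact b.2
    have h2 : (G.induce s).edgeSet.ncard ≤ {e ∈ G.edgeSet | ∀ v ∈ e, col v ≠ c}.ncard := by
      calc (G.induce s).edgeSet.ncard
          = ((Sym2.map (Subtype.val : s → V)) '' (G.induce s).edgeSet).ncard :=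
            (Set.ncard_image_of_injective _ (Sym2.map.injective Subtype.val_injective)).symm
        _ ≤ _ := Set.ncard_le_ncard himg (Set.toFinite _)
    have h3 : Nat.card s = Fintype.card s := Nat.card_eq_fintype_card
    omega
  · have : Nat.card s = 0 := by
      simp [Nat.card_eq_zero, not_nonempty_iff.mp hne]
    omega

/-- First counting bound: if `G` is internally vertex-color-avoiding connected on `n` vertices
with exactly `k ≥ 2` colors, and `x` is the number of edges whose two endpoints have the same
color, then `(k-2)·|E(G)| ≥ (k-1)·n - k - x`. -/

theorem stmt14 {V C : Type*} [Fintype V] (G : SimpleGraph V) (col : V → C) (k : ℕ)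
    (hk : 2 ≤ k) (hcols : (Set.range col).ncard = k)
    (h : InternallyVertexColorAvoidingConnected G col)
    (x : ℕ) (hx : x = {e ∈ G.edgeSet | ∀ u v : V, e = s(u, v) → col u = col v}.ncard) :
    ((k : ℤ) - 1) * Fintype.card V - k - x ≤ ((k : ℤ) - 2) * G.edgeSet.ncard := by
  classical
  set n : ℕ := Fintype.card V with hn
  set R : Finset C := (Set.finite_range col).toFinset with hR
  have hRk : R.card = k := by
    rw [← hcols]
    exact (Set.ncard_eq_toFinset_card _ (Set.finite_range col)).symm
  set E : Finset (Sym2 V) := (Set.toFinite G.edgeSet).toFinset with hE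
  have hEcard : G.edgeSet.ncard = E.card := Set.ncard_eq_toFinset_card _ (Set.toFinite G.edgeSet)
  set nc : C → ℕ := fun c => (univ.filter fun v => col v = c).card with hnc
  set Ec : C → Finset (Sym2 V) := fun c => E.filter (fun e => ∀ v ∈ e, col v ≠ c) with hEc
  set M : Finset (Sym2 V) := E.filter (fun e => ∀ u v : V, e = s(u, v) → col u = col v) with hM
  have hxM : x = M.card := by
    rw [hx, ← Set.ncard_coe_finset]
    congr 1
    ext e
    simp only [hM, hE, Set.Finite.mem_toFinset, Finset.coe_filter, Finset.mem_filter,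
      Set.mem_setOf_eq]
  -- per color bound
  have keyc : ∀ c : C, (n : ℤ) - nc c - 1 ≤ ((Ec c).card : ℤ) := by
    intro c
    have hb := color_bound G col c (h c)
    have h1 : Nat.card {v : V | col v ≠ c} = (univ.filter fun v => col v ≠ c).card := by
      rw [Nat.card_eq_fintype_card]
      exact Fintype.card_subtype _
    have h2 : nc c + (univ.filter fun v => col v ≠ c).card = n := by
      simpa using card_filter_add_card_filter_not (s := (univ : Finset V))
        (p := fun v => col v = c)
    have h3 : {e ∈ G.edgeSet | ∀ v ∈ e, col v ≠ c}.ncard = (Ec c).card := by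
      rw [← Set.ncard_coe_finset]
      congr 1
      ext e
      simp only [hEc, hE, Set.Finite.mem_toFinset, Finset.coe_filter, Finset.mem_filter,
        Set.mem_setOf_eq]
    rw [h3, h1] at hb
    omega
  -- summed lower bound
  have hfib : n = ∑ c ∈ R, nc c := by
    rw [hn, ← Finset.card_univ]
    exact card_eq_sum_card_fiberwise (fun v _ => by
      simp [hR, Set.Finite.mem_toFinset])
  have hsum1 : (k : ℤ) * n - n - k ≤ ∑ c ∈ R, ((Ec c).card : ℤ) := by
    calc (k : ℤ) * n - n - k = ∑ c ∈ R, ((n : ℤ) - nc c - 1) := by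
          rw [Finset.sum_sub_distrib, Finset.sum_sub_distrib, Finset.sum_const, Finset.sum_const,
            hRk]
          have : (∑ c ∈ R, (nc c : ℤ)) = (n : ℤ) := by exact_mod_cast (congrArg Nat.cast hfib).symm
          rw [this]
          push_cast
          ring
      _ ≤ _ := Finset.sum_le_sum (fun c _ => keyc c)
  -- double counting
  have hswap : ∑ c ∈ R, ((Ec c).card) = ∑ e ∈ E, ((R.filter fun c => ∀ v ∈ e, col v ≠ c).card) := by
    simp only [hEc, Finset.card_filter]
    rw [Finset.sum_comm]
  have key : ∀ e ∈ E, ((R.filter fun c => ∀ v ∈ e, col v ≠ c).card : ℤ)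
      = (k : ℤ) - (if (∀ u v : V, e = s(u, v) → col u = col v) then 1 else 2) := by
    intro e he
    induction e using Sym2.ind with
    | _ a b =>
      have hab : G.Adj a b := by
        rw [hE, Set.Finite.mem_toFinset] at he
        exact he
      have hne : a ≠ b := hab.ne
      have hQ : (∀ u v : V, s(a, b) = s(u, v) → col u = col v) ↔ col a = col b := by
        constructor
        · intro hq; exact hq a b rfl
        · intro hq u v huv
          rw [Sym2.eq_iff] at huv
          rcases huv with ⟨rfl, rfl⟩ | ⟨rfl, rfl⟩
          · exact hq
          · exact hq.symm
      have hfilter : (R.filter fun c => ∀ v ∈ s(a, b), col v ≠ c) = R \ {col a, col b} := by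
        ext c
        simp only [mem_filter, mem_sdiff, mem_insert, mem_singleton, Sym2.mem_iff]
        constructor
        · rintro ⟨hcR, hP⟩
          refine ⟨hcR, ?_⟩
          rintro (rfl | rfl)
          · exact hP a (Or.inl rfl) rfl
          · exact hP b (Or.inr rfl) rfl
        · rintro ⟨hcR, hcne⟩
          push_neg at hcne
          refine ⟨hcR, ?_⟩
          rintro v (rfl | rfl)
          · exact hcne.1.symm
          · exact hcne.2.symm
      have hsub : ({col a, col b} : Finset C) ⊆ R := by
        intro z hz
        simp only [mem_insert, mem_singleton] at hz
        rcases hz with rfl | rfl <;>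
          simp [hR, Set.Finite.mem_toFinset]
      have hcard2 : ({col a, col b} : Finset C).card = if col a = col b then 1 else 2 := by
        split
        · next hh => simp [hh]
        · next hh => rw [card_insert_of_notMem (by simpa using hh), card_singleton]
      have hle : ({col a, col b} : Finset C).card ≤ k := hRk ▸ card_le_card hsub
      rw [hfilter, card_sdiff_of_subset hsub, hRk, Nat.cast_sub hle, hcard2]
      simp only [hQ]
      split <;> simp
  have hsum2 : ∑ c ∈ R, ((Ec c).card : ℤ) = ((k : ℤ) - 2) * E.card + M.card := by
    have : (∑ c ∈ R, ((Ec c).card : ℤ)) = ∑ e ∈ E, ((R.filter fun c => ∀ v ∈ e, col v ≠ c).card : ℤ) := by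
      exact_mod_cast congrArg Nat.cast hswap
    rw [this, Finset.sum_congr rfl key, Finset.sum_sub_distrib, Finset.sum_const]
    have hite : (∑ e ∈ E, (if (∀ u v : V, e = s(u, v) → col u = col v) then (1 : ℤ) else 2))
        = 2 * E.card - M.card := by
      have : ∀ e ∈ E, (if (∀ u v : V, e = s(u, v) → col u = col v) then (1 : ℤ) else 2)
          = 2 - (if (∀ u v : V, e = s(u, v) → col u = col v) then (1 : ℤ) else 0) := by
        intro e _; split <;> norm_num
      rw [Finset.sum_congr rfl this, Finset.sum_sub_distrib, Finset.sum_const, Finset.sum_boole]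
      simp only [hM]
      push_cast
      ring
    rw [hite]
    push_cast
    ring
  rw [hEcard, hxM]
  rw [hsum2] at hsum1
  push_cast
  linarith
end

section
/- Let G be an internally vertex-color-avoiding connected graph on n vertices colored with exactly k ≥ 2 colors, and let x be the number of edges of G whose two endpoints have the same color. Then k·|E(G)| ≥ k·n - k + x. -/
open SimpleGraph

section Aux
variable {V C : Type*}

def IVC (G : SimpleGraph V) (col : V → C) : Prop :=
  ∀ (c : C) (u v : V), ∃ p : G.Walk u v, ∀ w ∈ p.support, w ≠ u → w ≠ v → col w ≠ c

lemma conn_bound [Fintype V] (G : SimpleGraph V) (h : G.Connected) :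
    Fintype.card V ≤ G.edgeSet.ncard + 1 := by
  classical
  obtain ⟨root⟩ := h.nonempty
  choose p hp using fun w => h.exists_walk_length_eq_dist w root
  set f : V → Sym2 V := fun w => s(w, (p w).getVert 1) with hf
  have hmaps : ∀ a ∈ {w : V | w ≠ root}, f a ∈ G.edgeSet := by
    intro a ha
    have hnn : ¬ (p a).Nil := Walk.not_nil_of_ne ha
    have := ((p a).firstDart hnn).edge_mem
    rwa [Walk.edge_firstDart] at this
  have key : ∀ a b : V, a ≠ root → b ≠ root → f a = f b →
      G.dist a root ≤ G.dist b root → a = b := by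
    intro a b ha hb hab hle
    have hnna : ¬ (p a).Nil := Walk.not_nil_of_ne ha
    rw [hf] at hab
    simp only [Sym2.eq, Sym2.rel_iff', Prod.mk.injEq, Prod.swap_prod_mk] at hab
    rcases hab with ⟨h1, _⟩ | ⟨h1, h2⟩
    · exact h1
    · exfalso
      have hq : (((p a).tail).copy h2 rfl).length = (p a).length - 1 := by
        rw [Walk.length_copy]
        have := Walk.length_tail_add_one hnna
        omega
      have hd : G.dist b root ≤ (((p a).tail).copy h2 rfl).length := dist_le _
      have hposb : 0 < G.dist b root := h.pos_dist_of_ne hb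
      have hpa := hp a
      have hpb := hp b
      omega
  have hinj : Set.InjOn f {w : V | w ≠ root} := by
    intro a ha b hb hab
    rcases le_total (G.dist a root) (G.dist b root) with hle | hle
    · exact key a b ha hb hab hle
    · exact (key b a hb ha hab.symm hle).symm
  have hle := Set.ncard_le_ncard_of_injOn f hmaps hinj (Set.toFinite _)
  have : ({w : V | w ≠ root} : Set V).ncard = Fintype.card V - 1 := by
    have : ({w : V | w ≠ root} : Set V) = {root}ᶜ := by ext; simp
    rw [this]
    simp [Set.ncard_eq_toFinset_card', Set.toFinset_compl, Set.toFinset_singleton,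
      Finset.card_compl]
  have hpos : 0 < Fintype.card V := Fintype.card_pos_iff.mpr ⟨root⟩
  omega

lemma del_conn (G : SimpleGraph V) (col : V → C)
    (h : IVC G col) (c : C) (w0 : V) (hw0 : col w0 ≠ c) :
    (G.deleteEdges {e : Sym2 V | ∀ z ∈ e, col z = c}).Connected := by
  set H := G.deleteEdges {e : Sym2 V | ∀ z ∈ e, col z = c} with hH
  have reach : ∀ u : V, H.Reachable u w0 := by
    intro u
    obtain ⟨p, hp⟩ := h c u w0
    have hsup : ∀ z ∈ p.support, col z ≠ c ∨ z = u := by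
      intro z hz
      by_cases hzu : z = u
      · exact Or.inr hzu
      by_cases hzw : z = w0
      · exact Or.inl (hzw ▸ hw0)
      · exact Or.inl (hp z hz hzu hzw)
    have hedges : ∀ e ∈ p.edges, e ∈ H.edgeSet := by
      intro e he
      have heG : e ∈ G.edgeSet := p.edges_subset_edgeSet he
      rw [hH, edgeSet_deleteEdges]
      refine ⟨heG, ?_⟩
      induction e with
      | h a b =>
        intro hmem
        have hca : col a = c := hmem a (Sym2.mem_mk_left a b)
        have hcb : col b = c := hmem b (Sym2.mem_mk_right a b)
        have hne : a ≠ b := (G.mem_edgeSet.mp heG).ne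
        have ha := hsup a (Walk.fst_mem_support_of_mem_edges p he)
        have hb := hsup b (Walk.snd_mem_support_of_mem_edges p he)
        rcases ha with ha | ha
        · exact ha hca
        · rcases hb with hb | hb
          · exact hb hcb
          · exact hne (ha.trans hb.symm)
    exact ⟨p.transfer H hedges⟩
  have : Nonempty V := ⟨w0⟩
  exact Connected.mk (fun u v => (reach u).trans (reach v).symm)

end Aux

theorem stmt15' {V C : Type*} [Fintype V] (G : SimpleGraph V) (col : V → C) (k : ℕ)
    (hk : 2 ≤ k) (hcols : (Set.range col).ncard = k)
    (h : IVC G col)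
    (x : ℕ) (hx : x = {e ∈ G.edgeSet | ∀ u v : V, e = s(u, v) → col u = col v}.ncard) :
    (k : ℤ) * Fintype.card V - k + x ≤ (k : ℤ) * G.edgeSet.ncard := by
  classical
  set M : C → Set (Sym2 V) := fun c => {e : Sym2 V | ∀ z ∈ e, col z = c} with hM
  have hE : G.edgeSet.Finite := Set.toFinite _
  set EF := hE.toFinset with hEF
  have hfin : (Set.range col).Finite := Set.finite_range col
  set F := hfin.toFinset with hF
  have hFcard : F.card = k := by
    rw [hF, ← Set.ncard_eq_toFinset_card _ hfin, hcols]
  have hw : ∀ c : C, ∃ w0, col w0 ≠ c := by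
    intro c
    have h1 : 1 < F.card := by omega
    obtain ⟨c', hc'F, hne⟩ := Finset.exists_mem_ne h1 c
    obtain ⟨w0, hw0⟩ := hfin.mem_toFinset.mp hc'F
    exact ⟨w0, by rw [hw0]; exact hne⟩
  have bound : ∀ c : C, Fintype.card V ≤ (EF.filter (fun e => ¬ e ∈ M c)).card + 1 := by
    intro c
    obtain ⟨w0, hw0⟩ := hw c
    have hconn := del_conn G col h c w0 hw0
    have hb := conn_bound _ hconn
    have heq : (G.deleteEdges {e : Sym2 V | ∀ z ∈ e, col z = c}).edgeSet.ncard
        = (EF.filter (fun e => ¬ e ∈ M c)).card := by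
      rw [Set.ncard_eq_toFinset_card _ (Set.toFinite _)]
      congr 1
      ext e
      simp only [Set.Finite.mem_toFinset, Finset.mem_filter, edgeSet_deleteEdges, hEF]
      exact Iff.rfl
    omega
  set XF := EF.filter (fun e => ∀ u v : V, e = s(u, v) → col u = col v) with hXFdef
  have hxXF : x = XF.card := by
    rw [hx, Set.ncard_eq_toFinset_card _ (hE.subset (Set.sep_subset _ _))]
    congr 1
    ext e
    simp only [Set.Finite.mem_toFinset, Set.mem_setOf_eq, hXFdef, Finset.mem_filter, hEF]
  have hXF : XF = F.biUnion (fun c => EF.filter (fun e => e ∈ M c)) := by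
    ext e
    induction e with
    | h a b =>
      simp only [hXFdef, Finset.mem_biUnion, Finset.mem_filter, hM, Set.mem_setOf_eq, hF,
        Set.Finite.mem_toFinset, Set.mem_range]
      constructor
      · rintro ⟨heG, hmono⟩
        refine ⟨col a, ⟨a, rfl⟩, heG, ?_⟩
        intro z hz
        rcases Sym2.mem_iff.mp hz with rfl | rfl
        · rfl
        · exact (hmono a z rfl).symm
      · rintro ⟨c, _, heG, hall⟩
        refine ⟨heG, ?_⟩
        intro u v huv
        have hu : u ∈ s(a, b) := huv ▸ Sym2.mem_mk_left u v
        have hv : v ∈ s(a, b) := huv ▸ Sym2.mem_mk_right u v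
        rw [hall u hu, hall v hv]
  have hdisj : ∀ c ∈ F, ∀ c' ∈ F, c ≠ c' →
      Disjoint (EF.filter (fun e => e ∈ M c)) (EF.filter (fun e => e ∈ M c')) := by
    intro c _ c' _ hne
    refine Finset.disjoint_left.mpr ?_
    intro e he he'
    simp only [Finset.mem_filter, hM, Set.mem_setOf_eq] at he he'
    have hz : e.out.1 ∈ e := Sym2.out_fst_mem e
    exact hne ((he.2 _ hz).symm.trans (he'.2 _ hz))
  have hsum : ∑ c ∈ F, (EF.filter (fun e => e ∈ M c)).card = XF.card := by
    rw [hXF, Finset.card_biUnion hdisj]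
  have hsplit : ∀ c, (EF.filter (fun e => e ∈ M c)).card
      + (EF.filter (fun e => ¬ e ∈ M c)).card = EF.card := fun c =>
    Finset.card_filter_add_card_filter_not _
  have h1 : ∑ c ∈ F, Fintype.card V ≤
      ∑ c ∈ F, ((EF.filter (fun e => ¬ e ∈ M c)).card + 1) :=
    Finset.sum_le_sum fun c _ => bound c
  rw [Finset.sum_const, hFcard, smul_eq_mul, Finset.sum_add_distrib, Finset.sum_const, hFcard,
    smul_eq_mul, mul_one] at h1
  have h2 : ∑ c ∈ F, (EF.filter (fun e => e ∈ M c)).card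
      + ∑ c ∈ F, (EF.filter (fun e => ¬ e ∈ M c)).card = k * EF.card := by
    rw [← Finset.sum_add_distrib, Finset.sum_congr rfl (fun c _ => hsplit c),
      Finset.sum_const, hFcard, smul_eq_mul]
  have hE' : G.edgeSet.ncard = EF.card := Set.ncard_eq_toFinset_card _ hE
  have main : k * Fintype.card V + x ≤ k * EF.card + k := by
    rw [hxXF, ← hsum]
    omega
  rw [hE']
  have main' : (k : ℤ) * Fintype.card V + x ≤ (k : ℤ) * EF.card + k := by
    exact_mod_cast main
  linarith

/-- Second counting bound: if `G` is internally vertex-color-avoiding connected on `n` vertices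
with exactly `k ≥ 2` colors, and `x` is the number of edges whose two endpoints have the same
color, then `k·|E(G)| ≥ k·n - k + x`. -/
theorem stmt15 {V C : Type*} [Fintype V] (G : SimpleGraph V) (col : V → C) (k : ℕ)
    (hk : 2 ≤ k) (hcols : (Set.range col).ncard = k)
    (h : InternallyVertexColorAvoidingConnected G col)
    (x : ℕ) (hx : x = {e ∈ G.edgeSet | ∀ u v : V, e = s(u, v) → col u = col v}.ncard) :
    (k : ℤ) * Fintype.card V - k + x ≤ (k : ℤ) * G.edgeSet.ncard :=
  stmt15' G col k hk hcols (fun c u v => h c u v) x hx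
end

section
/- Let G be a vertex-color-avoiding connected graph on n vertices, and let T be a spanning tree of G. Then there exists a vertex-color-avoiding connected spanning subgraph G' of G containing T with at most 2n - 3 edges. In particular, every edge-minimal vertex-color-avoiding connected graph on n vertices has at most 2n-3 edges. -/
open SimpleGraph

section AuxVCA

variable {V C : Type*}

/-- The subgraph of `G` consisting of the edges with both endpoints not colored `c`. -/
private def cstrip (G : SimpleGraph V) (col : V → C) (c : C) : SimpleGraph V where
  Adj a b := G.Adj a b ∧ col a ≠ c ∧ col b ≠ c
  symm := ⟨fun a b h => ⟨h.1.symm, h.2.2, h.2.1⟩⟩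
  loopless := ⟨fun a h => G.loopless.irrefl a h.1⟩

private lemma cstrip_le (G : SimpleGraph V) (col : V → C) (c : C) : cstrip G col c ≤ G :=
  fun _ _ h => h.1

private lemma cstrip_mono {G H : SimpleGraph V} (h : G ≤ H) (col : V → C) (c : C) :
    cstrip G col c ≤ cstrip H col c := fun _ _ hh => ⟨h hh.1, hh.2⟩

private lemma cstrip_support {G : SimpleGraph V} {col : V → C} {c : C} :
    ∀ {u v : V} (p : (cstrip G col c).Walk u v), col u ≠ c → ∀ w ∈ p.support, col w ≠ c := by
  intro u v p
  induction p with
  | nil =>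
    intro hu w hw
    rw [SimpleGraph.Walk.support_nil, List.mem_singleton] at hw
    subst hw; exact hu
  | cons h q ih =>
    intro hu w hw
    rw [SimpleGraph.Walk.support_cons, List.mem_cons] at hw
    rcases hw with rfl | hw
    · exact hu
    · exact ih h.2.2 w hw

private lemma vca_iff {G : SimpleGraph V} {col : V → C} :
    VertexColorAvoidingConnected G col ↔
      (∀ u v : V, G.Reachable u v) ∧
        ∀ (c : C) (u v : V), col u ≠ c → col v ≠ c → (cstrip G col c).Reachable u v := by
  constructor
  · intro h
    refine ⟨fun u v => (h (col u) u v).1, fun c u v hu hv => ?_⟩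
    rcases (h c u v).2 with h1 | h1 | ⟨p, hp⟩
    · exact absurd h1 hu
    · exact absurd h1 hv
    · refine ⟨p.transfer (cstrip G col c) ?_⟩
      intro e he
      induction e with
      | _ a b =>
        rw [mem_edgeSet]
        exact ⟨G.mem_edgeSet.mp (p.edges_subset_edgeSet he),
          hp a (p.fst_mem_support_of_mem_edges he),
          hp b (p.snd_mem_support_of_mem_edges he)⟩
  · rintro ⟨hpre, hstrip⟩ c u v
    refine ⟨hpre u v, ?_⟩
    by_cases hu : col u = c
    · exact Or.inl hu
    by_cases hv : col v = c
    · exact Or.inr (Or.inl hv)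
    obtain ⟨q⟩ := hstrip c u v hu hv
    refine Or.inr (Or.inr ⟨q.transfer G (fun e he =>
      (edgeSet_mono (cstrip_le G col c)) (q.edges_subset_edgeSet he)), ?_⟩)
    rw [SimpleGraph.Walk.support_transfer]
    exact cstrip_support q hu

private lemma vca_mono {G H : SimpleGraph V} {col : V → C} (hGH : G ≤ H)
    (h : VertexColorAvoidingConnected G col) : VertexColorAvoidingConnected H col := by
  rw [vca_iff] at h ⊢
  exact ⟨fun u v => (h.1 u v).mono hGH,
    fun c u v hu hv => (h.2 c u v hu hv).mono (cstrip_mono hGH col c)⟩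

/-- The number of connected components of `H` meeting the set `R`. -/
private noncomputable def nComp (H : SimpleGraph V) (R : Set V) : ℕ :=
  (H.connectedComponentMk '' R).ncard

private lemma ncard_image_lt {α β : Type*} {f : α → β} {s : Set α} (hs : s.Finite) {x y : α}
    (hx : x ∈ s) (hy : y ∈ s) (hxy : x ≠ y) (hf : f x = f y) :
    (f '' s).ncard < s.ncard := by
  have himg : f '' s = f '' (s \ {x}) := by
    apply Set.Subset.antisymm
    · rintro _ ⟨w, hw, rfl⟩
      by_cases hwx : w = x
      · exact ⟨y, ⟨hy, fun hyx => hxy ((Set.mem_singleton_iff.mp hyx).symm)⟩, by rw [hwx, hf]⟩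
      · exact ⟨w, ⟨hw, hwx⟩, rfl⟩
    · exact Set.image_mono Set.diff_subset
  calc (f '' s).ncard = (f '' (s \ {x})).ncard := by rw [himg]
    _ ≤ (s \ {x}).ncard := Set.ncard_image_le hs.diff
    _ < s.ncard := Set.ncard_diff_singleton_lt_of_mem hx hs

private lemma exists_cross {K H : SimpleGraph V} :
    ∀ {u v : V}, K.Walk u v → ¬H.Reachable u v →
      ∃ a b, K.Adj a b ∧ H.Reachable u a ∧ ¬H.Reachable u b := by
  intro u v p
  induction p with
  | nil => intro hne; exact absurd (Reachable.refl _) hne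
  | @cons u b v h q ih =>
    intro hne
    by_cases hub : H.Reachable u b
    · have hbv : ¬H.Reachable b v := fun hr => hne (hub.trans hr)
      obtain ⟨a', b', hadj, h1, h2⟩ := ih hbv
      exact ⟨a', b', hadj, hub.trans h1, fun hr => h2 (hub.symm.trans hr)⟩
    · exact ⟨u, b, h, Reachable.refl _, hub⟩

/-- Any subgraph `H` of `K` can be augmented inside `K`, by at most
(number of components of `H` meeting `R`) - 1 many edges, so that all pairs of vertices
of `R` become reachable (assuming they are reachable in `K` and every edge of `K` has its
endpoints in `R`). -/
private lemma reconnect [Finite V] (K : SimpleGraph V) (R : Set V)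
    (hcl : ∀ a b, K.Adj a b → a ∈ R)
    (hK : ∀ u ∈ R, ∀ v ∈ R, K.Reachable u v) :
    ∀ (k : ℕ) (H : SimpleGraph V), H ≤ K → nComp H R ≤ k →
      ∃ F, H ≤ F ∧ F ≤ K ∧ (∀ u ∈ R, ∀ v ∈ R, F.Reachable u v) ∧
        (F.edgeSet \ H.edgeSet).ncard + 1 ≤ max 1 (nComp H R) := by
  intro k
  induction k with
  | zero =>
    intro H hHK hle
    have hR : R = ∅ := by
      by_contra hne
      obtain ⟨u, hu⟩ := Set.nonempty_iff_ne_empty.mpr hne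
      have : 0 < nComp H R := by
        rw [nComp, Set.ncard_pos (Set.toFinite _)]
        exact ⟨_, u, hu, rfl⟩
      omega
    subst hR
    exact ⟨H, le_rfl, hHK, by simp, by simp⟩
  | succ k ih =>
    intro H hHK hle
    by_cases hreach : ∀ u ∈ R, ∀ v ∈ R, H.Reachable u v
    · exact ⟨H, le_rfl, hHK, hreach, by simp⟩
    push_neg at hreach
    obtain ⟨u, hu, v, hv, huv⟩ := hreach
    obtain ⟨p⟩ := hK u hu v hv
    obtain ⟨a, b, hab, hua, hub⟩ := exists_cross p huv
    have hb : b ∈ R := hcl b a hab.symm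
    have habne : a ≠ b := hab.ne
    set H' := H ⊔ fromEdgeSet {s(a, b)} with hH'def
    have hHH' : H ≤ H' := le_sup_left
    have hH'ab : H'.Adj a b := Or.inr ((fromEdgeSet_adj _).mpr ⟨rfl, habne⟩)
    have hH'K : H' ≤ K := by
      refine sup_le hHK fun x y hxy => ?_
      rw [fromEdgeSet_adj _, Set.mem_singleton_iff, Sym2.eq_iff] at hxy
      rcases hxy.1 with ⟨rfl, rfl⟩ | ⟨rfl, rfl⟩
      exacts [hab, hab.symm]
    have hmaps : ∀ x : V, (H.connectedComponentMk x).map (SimpleGraph.Hom.ofLE hHH')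
        = H'.connectedComponentMk x := fun x => ConnectedComponent.map_mk _ _
    have himage : H'.connectedComponentMk '' R =
        (ConnectedComponent.map (SimpleGraph.Hom.ofLE hHH')) '' (H.connectedComponentMk '' R) := by
      rw [Set.image_image]
      exact (Set.image_congr fun x _ => (hmaps x).symm)
    have hdec : nComp H' R < nComp H R := by
      rw [nComp, himage]
      refine ncard_image_lt (Set.toFinite _) ⟨u, hu, rfl⟩ ⟨b, hb, rfl⟩
        (fun hmk => hub (SimpleGraph.ConnectedComponent.exact hmk)) ?_
      rw [hmaps, hmaps]
      exact ConnectedComponent.sound ((hua.mono hHH').trans hH'ab.reachable)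
    have hcomp1 : 1 ≤ nComp H' R := by
      rw [nComp]
      have : 0 < (H'.connectedComponentMk '' R).ncard := by
        rw [Set.ncard_pos (Set.toFinite _)]
        exact ⟨_, u, hu, rfl⟩
      omega
    obtain ⟨F, h1, h2, h3, h4⟩ := ih H' hH'K (by omega)
    refine ⟨F, hHH'.trans h1, h2, h3, ?_⟩
    have hsub : F.edgeSet \ H.edgeSet ⊆ insert s(a, b) (F.edgeSet \ H'.edgeSet) := by
      intro e he
      by_cases heq : e = s(a, b)
      · subst heq; exact Set.mem_insert _ _
      refine Set.mem_insert_of_mem _ ⟨he.1, fun hmem => ?_⟩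
      rw [hH'def, edgeSet_sup, edgeSet_fromEdgeSet] at hmem
      rcases hmem with hmem | hmem
      · exact he.2 hmem
      · exact heq hmem.1
    have hc1 : (F.edgeSet \ H.edgeSet).ncard ≤ (F.edgeSet \ H'.edgeSet).ncard + 1 :=
      le_trans (Set.ncard_le_ncard hsub (Set.toFinite _)) (Set.ncard_insert_le _ _)
    have : max 1 (nComp H' R) = nComp H' R := max_eq_right hcomp1
    omega

/-- In a connected graph, every non-root vertex has a neighbor strictly closer to the root. -/
private lemma exists_closer {T : SimpleGraph V} (hc : T.Connected) {r s : V} (hsr : s ≠ r) :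
    ∃ w, T.Adj s w ∧ T.dist r w < T.dist r s := by
  obtain ⟨p, hp⟩ := (hc s r).exists_walk_length_eq_dist
  cases p with
  | nil => exact absurd rfl hsr
  | @cons _ b _ h q =>
    refine ⟨b, h, ?_⟩
    have h1 : T.dist b r ≤ q.length := SimpleGraph.dist_le q
    rw [SimpleGraph.Walk.length_cons] at hp
    have h2 : T.dist r b = T.dist b r := SimpleGraph.dist_comm
    have h3 : T.dist r s = T.dist s r := SimpleGraph.dist_comm
    omega

/-- Removing the vertices of color `c` from a tree `T` leaves at most
`1 + ∑_{col v = c} (deg v - 1)` components. -/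
private lemma tree_comp_bound [Fintype V] (T : SimpleGraph V) (hT : T.IsTree) (col : V → C)
    (c : C) (S : Finset V) (hS : ∀ v, v ∈ S ↔ col v = c) :
    nComp (cstrip T col c) {v | col v ≠ c} ≤ 1 + ∑ v ∈ S, ((T.neighborSet v).ncard - 1) := by
  classical
  rcases Finset.eq_empty_or_nonempty S with hSe | ⟨r, hr⟩
  · have hcol : ∀ v : V, col v ≠ c := fun v hv => by
      rw [← hS] at hv; rw [hSe] at hv; exact absurd hv (Finset.notMem_empty v)
    have : nComp (cstrip T col c) {v | col v ≠ c} ≤ 1 := by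
      rw [nComp, Set.ncard_le_one (Set.toFinite _)]
      rintro _ ⟨x, _, rfl⟩ _ ⟨y, _, rfl⟩
      apply ConnectedComponent.sound
      obtain ⟨p⟩ := hT.isConnected x y
      exact ⟨p.transfer _ (fun e he => by
        induction e with
        | _ a b =>
          rw [mem_edgeSet]
          exact ⟨T.mem_edgeSet.mp (p.edges_subset_edgeSet he), hcol a, hcol b⟩)⟩
    omega
  · have hrc : col r = c := (hS r).mp hr
    set TC := cstrip T col c with hTCdef
    set R : Set V := {v | col v ≠ c} with hRdef
    set P : V → Prop := fun w => col w ≠ c ∧ ∀ x, TC.Reachable w x → T.dist r w ≤ T.dist r x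
      with hPdef
    set topF : Finset V := Finset.univ.filter P with htopFdef
    have hcover : (TC.connectedComponentMk '' R) ⊆ TC.connectedComponentMk '' ↑topF := by
      rintro _ ⟨w, hw, rfl⟩
      obtain ⟨t, ht, hmin⟩ := Finset.exists_min_image
        (Finset.univ.filter (fun x => TC.Reachable w x)) (fun x => T.dist r x)
        ⟨w, by simp [SimpleGraph.Reachable.refl]⟩
      rw [Finset.mem_filter] at ht
      have hwt : TC.Reachable w t := ht.2
      have htc : col t ≠ c := by
        obtain ⟨p⟩ := hwt
        exact cstrip_support p hw t p.end_mem_support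
      refine ⟨t, ?_, (ConnectedComponent.sound hwt).symm⟩
      rw [htopFdef, Finset.mem_coe, Finset.mem_filter]
      refine ⟨Finset.mem_univ t, htc, fun x hx => ?_⟩
      exact hmin x (by simp [hwt.trans hx])
    have hd : ∀ w, P w → ∃ s, s ∈ S ∧ T.Adj w s ∧ T.dist r s < T.dist r w := by
      intro w hw
      have hwr : w ≠ r := fun hwr => hw.1 (hwr ▸ hrc)
      obtain ⟨s, hadj, hlt⟩ := exists_closer hT.isConnected hwr
      refine ⟨s, ?_, hadj, hlt⟩
      rw [hS]
      by_contra hsc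
      have : TC.Reachable w s := SimpleGraph.Adj.reachable ⟨hadj, hw.1, hsc⟩
      exact absurd (hw.2 s this) (by omega)
    choose! par hpar1 hpar2 hpar3 using hd
    have hfiber : topF.card = ∑ s ∈ S, (topF.filter (fun w => par w = s)).card := by
      refine Finset.card_eq_sum_card_fiberwise fun w hw => ?_
      rw [htopFdef, Finset.mem_coe, Finset.mem_filter] at hw
      exact hpar1 w hw.2
    have hfb : ∀ s ∈ S, (topF.filter (fun w => par w = s)).card ≤
        ((T.neighborSet s).ncard - 1) + (if s = r then 1 else 0) := by
      intro s hs
      have hdeg : (T.neighborFinset s).card = (T.neighborSet s).ncard := by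
        rw [SimpleGraph.neighborFinset_def, ← Set.ncard_eq_toFinset_card']
      by_cases hsr : s = r
      · subst hsr
        have hsubn : topF.filter (fun w => par w = s) ⊆ T.neighborFinset s := by
          intro w hw
          rw [Finset.mem_filter] at hw
          obtain ⟨hw1, hw2⟩ := hw
          rw [htopFdef, Finset.mem_filter] at hw1
          rw [SimpleGraph.mem_neighborFinset]
          exact (hw2 ▸ hpar2 w hw1.2).symm
        have := Finset.card_le_card hsubn
        rw [if_pos rfl]
        omega
      · obtain ⟨w0, hw0adj, hw0lt⟩ := exists_closer hT.isConnected hsr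
        have hsubn : topF.filter (fun w => par w = s) ⊆ (T.neighborFinset s).erase w0 := by
          intro w hw
          rw [Finset.mem_filter] at hw
          obtain ⟨hw1, hw2⟩ := hw
          rw [htopFdef, Finset.mem_filter] at hw1
          have h3 := hw2 ▸ hpar3 w hw1.2
          refine Finset.mem_erase.mpr ⟨fun hww0 => ?_, ?_⟩
          · subst hww0; omega
          · rw [SimpleGraph.mem_neighborFinset]
            exact (hw2 ▸ hpar2 w hw1.2).symm
        have h4 := Finset.card_le_card hsubn
        have h5 : ((T.neighborFinset s).erase w0).card = (T.neighborFinset s).card - 1 :=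
          Finset.card_erase_of_mem ((T.mem_neighborFinset s w0).mpr hw0adj)
        rw [if_neg hsr]
        omega
    have hsum : ∑ s ∈ S, (((T.neighborSet s).ncard - 1) + (if s = r then 1 else 0)) =
        (∑ s ∈ S, ((T.neighborSet s).ncard - 1)) + 1 := by
      rw [Finset.sum_add_distrib, Finset.sum_ite_eq' S r (fun _ => 1), if_pos hr]
    have hmain : nComp TC R ≤ topF.card := by
      calc nComp TC R ≤ (TC.connectedComponentMk '' ↑topF).ncard :=
            Set.ncard_le_ncard hcover (Set.toFinite _)
        _ ≤ (↑topF : Set V).ncard := Set.ncard_image_le (Set.toFinite _)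
        _ = topF.card := Set.ncard_coe_finset _
    have := Finset.sum_le_sum hfb
    omega

private lemma ncard_biUnion_le' {α β : Type*} [Finite β] (s : Finset α) (f : α → Set β) :
    (⋃ a ∈ s, f a).ncard ≤ ∑ a ∈ s, (f a).ncard := by
  classical
  induction s using Finset.induction with
  | empty => simp
  | @insert x s hx ih =>
    rw [Finset.sum_insert hx, Finset.set_biUnion_insert]
    exact le_trans (Set.ncard_union_le _ _) (Nat.add_le_add_left ih _)

private lemma sum_deg_bound [Fintype V] (T : SimpleGraph V) (hT : T.IsTree) :
    ∑ v : V, ((T.neighborSet v).ncard - 1) ≤ Fintype.card V - 2 := by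
  classical
  have hdeg : ∀ v : V, (T.neighborSet v).ncard = T.degree v := by
    intro v
    rw [SimpleGraph.degree, SimpleGraph.neighborFinset_def, ← Set.ncard_eq_toFinset_card']
  rcases le_or_gt (Fintype.card V) 1 with h1 | h1
  · have hz : ∀ v : V, (T.neighborSet v).ncard - 1 = 0 := by
      intro v
      have := T.degree_lt_card_verts v
      rw [hdeg v]
      omega
    rw [Finset.sum_eq_zero (fun v _ => hz v)]
    omega
  · have hdegpos : ∀ v : V, 1 ≤ T.degree v := by
      intro v
      obtain ⟨w, hw⟩ := Fintype.exists_ne_of_one_lt_card h1 v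
      obtain ⟨p⟩ := hT.isConnected v w
      cases p with
      | nil => exact absurd rfl hw
      | cons h q => exact (T.degree_pos_iff_exists_adj v).mpr ⟨_, h⟩
    have hsum2 : ∑ v : V, T.degree v = 2 * (Fintype.card V - 1) := by
      rw [SimpleGraph.sum_degrees_eq_twice_card_edges]
      have := hT.card_edgeFinset
      omega
    have hsplit : (∑ v : V, (T.degree v - 1)) + Fintype.card V = ∑ v : V, T.degree v := by
      calc (∑ v : V, (T.degree v - 1)) + Fintype.card V
          = (∑ v : V, (T.degree v - 1)) + ∑ _v : V, 1 := by
            rw [Finset.sum_const, smul_eq_mul, mul_one, Finset.card_univ]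
        _ = ∑ v : V, ((T.degree v - 1) + 1) := (Finset.sum_add_distrib).symm
        _ = ∑ v : V, T.degree v := Finset.sum_congr rfl fun v _ => by
            have := hdegpos v; omega
    have hcongr : ∑ v : V, ((T.neighborSet v).ncard - 1) = ∑ v : V, (T.degree v - 1) :=
      Finset.sum_congr rfl fun v _ => by rw [hdeg]
    omega

end AuxVCA

/-- Given a vertex-color-avoiding connected graph `G` on `n` vertices and a spanning tree `T`
of `G`, there is a vertex-color-avoiding connected spanning subgraph `G'` of `G` containing `T`
with at most `2n - 3` edges; in particular, every edge-minimal vertex-color-avoiding connected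
graph on `n` vertices has at most `2n - 3` edges. -/
theorem stmt17 {V C : Type*} [Fintype V] (G T : SimpleGraph V) (col : V → C)
    (h : VertexColorAvoidingConnected G col) (hTG : T ≤ G) (hT : T.IsTree) :
    (∃ G' : SimpleGraph V, T ≤ G' ∧ G' ≤ G ∧ VertexColorAvoidingConnected G' col ∧
      G'.edgeSet.ncard ≤ 2 * Fintype.card V - 3) ∧
    ((∀ e ∈ G.edgeSet, ¬ VertexColorAvoidingConnected (G.deleteEdges {e}) col) →
      G.edgeSet.ncard ≤ 2 * Fintype.card V - 3) := by
  classical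
  have part1 : ∃ G' : SimpleGraph V, T ≤ G' ∧ G' ≤ G ∧ VertexColorAvoidingConnected G' col ∧
      G'.edgeSet.ncard ≤ 2 * Fintype.card V - 3 := by
    obtain ⟨hpre, hstrip⟩ := vca_iff.mp h
    have hrec : ∀ c : C, ∃ F : SimpleGraph V, cstrip T col c ≤ F ∧ F ≤ cstrip G col c ∧
        (∀ u ∈ {v | col v ≠ c}, ∀ v ∈ {v | col v ≠ c}, F.Reachable u v) ∧
        (F.edgeSet \ (cstrip T col c).edgeSet).ncard + 1 ≤
          max 1 (nComp (cstrip T col c) {v | col v ≠ c}) := fun c =>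
      reconnect (cstrip G col c) {v | col v ≠ c}
        (fun a b hab => hab.2.1) (fun u hu v hv => hstrip c u v hu hv)
        (nComp (cstrip T col c) {v | col v ≠ c}) (cstrip T col c)
        (cstrip_mono hTG col c) le_rfl
    choose F hF1 hF2 hF3 hF4 using hrec
    set CU : Finset C := Finset.univ.image col with hCU
    set U : Set (Sym2 V) := ⋃ c ∈ CU, ((F c).edgeSet \ (cstrip T col c).edgeSet) with hU
    set G' : SimpleGraph V := T ⊔ fromEdgeSet U with hG'
    have hTG' : T ≤ G' := le_sup_left
    have hFc_le : ∀ c ∈ CU, F c ≤ G' := by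
      intro c hc a b hab
      by_cases hT' : (cstrip T col c).Adj a b
      · exact Or.inl hT'.1
      · refine Or.inr ((fromEdgeSet_adj _).mpr ⟨?_, hab.ne⟩)
        rw [hU, Set.mem_iUnion₂]
        exact ⟨c, hc, (F c).mem_edgeSet.mpr hab,
          fun hmem => hT' ((cstrip T col c).mem_edgeSet.mp hmem)⟩
    have hG'G : G' ≤ G := by
      refine sup_le hTG fun x y hxy => ?_
      obtain ⟨hmem, hne⟩ := (fromEdgeSet_adj _).mp hxy
      rw [hU, Set.mem_iUnion₂] at hmem
      obtain ⟨c, hc, hmem2⟩ := hmem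
      exact (cstrip_le G col c) ((hF2 c) ((F c).mem_edgeSet.mp hmem2.1))
    have hvca : VertexColorAvoidingConnected G' col := by
      rw [vca_iff]
      refine ⟨fun u v => (hT.isConnected u v).mono hTG', fun c u v hu hv => ?_⟩
      by_cases hc : c ∈ CU
      · refine (hF3 c u hu v hv).mono (fun a b hab => ?_)
        exact ⟨hFc_le c hc hab, (hF2 c hab).2⟩
      · have hnc : ∀ w : V, col w ≠ c := fun w hw =>
          hc (Finset.mem_image.mpr ⟨w, Finset.mem_univ w, hw⟩)
        exact (hT.isConnected u v).mono (fun a b hab => ⟨hTG' hab, hnc a, hnc b⟩)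
    have hedges : G'.edgeSet ⊆ T.edgeSet ∪ U := by
      rw [hG', edgeSet_sup, edgeSet_fromEdgeSet]
      exact Set.union_subset_union_right _ Set.diff_subset
    have hTcard : T.edgeSet.ncard + 1 = Fintype.card V := by
      rw [Set.ncard_eq_toFinset_card']
      exact hT.card_edgeFinset
    have hperc : ∀ c ∈ CU, ((F c).edgeSet \ (cstrip T col c).edgeSet).ncard ≤
        ∑ v ∈ Finset.univ.filter (fun v => col v = c), ((T.neighborSet v).ncard - 1) := by
      intro c _
      have h1 := hF4 c
      have h2 := tree_comp_bound T hT col c (Finset.univ.filter (fun v => col v = c))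
        (fun v => by simp)
      have h3 : max 1 (nComp (cstrip T col c) {v | col v ≠ c}) ≤
          1 + ∑ v ∈ Finset.univ.filter (fun v => col v = c), ((T.neighborSet v).ncard - 1) :=
        max_le (by omega) h2
      omega
    have hUcard : U.ncard ≤ ∑ v : V, ((T.neighborSet v).ncard - 1) := by
      calc U.ncard ≤ ∑ c ∈ CU, ((F c).edgeSet \ (cstrip T col c).edgeSet).ncard :=
            ncard_biUnion_le' _ _
        _ ≤ ∑ c ∈ CU, ∑ v ∈ Finset.univ.filter (fun v => col v = c),
              ((T.neighborSet v).ncard - 1) := Finset.sum_le_sum hperc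
        _ = ∑ v : V, ((T.neighborSet v).ncard - 1) :=
            Finset.sum_fiberwise_of_maps_to
              (fun v _ => Finset.mem_image.mpr ⟨v, Finset.mem_univ v, rfl⟩) _
    have hdegsum := sum_deg_bound T hT
    have hG'card : G'.edgeSet.ncard ≤ T.edgeSet.ncard + U.ncard :=
      le_trans (Set.ncard_le_ncard hedges (Set.toFinite _)) (Set.ncard_union_le _ _)
    have hn : 1 ≤ Fintype.card V := Fintype.card_pos_iff.mpr hT.isConnected.nonempty
    exact ⟨G', hTG', hG'G, hvca, by omega⟩
  refine ⟨part1, fun hmin => ?_⟩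
  obtain ⟨G', hTG', hG'G, hvca, hcard⟩ := part1
  by_contra hbig
  push_neg at hbig
  have hne : ∃ e, e ∈ G.edgeSet ∧ e ∉ G'.edgeSet := by
    by_contra hno
    push_neg at hno
    have : G.edgeSet.ncard ≤ G'.edgeSet.ncard := Set.ncard_le_ncard hno (Set.toFinite _)
    omega
  obtain ⟨e, heG, heG'⟩ := hne
  have hle : G' ≤ G.deleteEdges {e} := by
    intro a b hab
    rw [SimpleGraph.deleteEdges_adj]
    refine ⟨hG'G hab, fun hmem => ?_⟩
    rw [Set.mem_singleton_iff] at hmem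
    exact heG' (hmem ▸ (G'.mem_edgeSet.mpr hab))
  exact hmin e heG (vca_mono hle hvca)
end

section
/- For every n ≥ 3, the graph on vertices v_0,...,v_{n-1} with edge set {v_j v_{j+1} : 0 ≤ j ≤ n-2} ∪ {v_j v_{j+2} : 0 ≤ j ≤ n-3}, where v_j has color j mod 3, is vertex-color-avoiding connected, and the deletion of any single edge destroys vertex-color-avoiding connectivity; hence the bound 2n-3 on the number of edges of edge-minimal vertex-color-avoiding connected graphs colored with exactly 3 colors is sharp. -/
section Aux19

private def Gr (n : ℕ) : SimpleGraph (Fin n) :=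
  SimpleGraph.fromRel fun i j : Fin n => j.val = i.val + 1 ∨ j.val = i.val + 2

private lemma gr_adj {n : ℕ} {i j : Fin n} :
    (Gr n).Adj i j ↔ i ≠ j ∧ ((j.val = i.val + 1 ∨ j.val = i.val + 2) ∨
      (i.val = j.val + 1 ∨ i.val = j.val + 2)) := by
  simp [Gr, SimpleGraph.fromRel_adj]

private lemma gr_adj' {n : ℕ} {i j : Fin n}
    (h : j.val = i.val + 1 ∨ j.val = i.val + 2) : (Gr n).Adj i j := by
  rw [gr_adj]
  refine ⟨?_, Or.inl h⟩
  intro he; subst he; omega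

private lemma avoidWalk {n : ℕ} (c : ℕ) : ∀ d : ℕ, ∀ u v : Fin n, v.val = u.val + d →
    u.val % 3 ≠ c → v.val % 3 ≠ c →
    ∃ p : (Gr n).Walk u v, ∀ w ∈ p.support, w.val % 3 ≠ c := by
  intro d
  induction d using Nat.strong_induction_on with
  | _ d ih =>
    intro u v hd hu hv
    rcases Nat.eq_zero_or_pos d with h0 | hpos
    · have : u = v := Fin.ext (by omega)
      subst this
      exact ⟨.nil, by simp [hu]⟩
    · by_cases h1 : (u.val + 1) % 3 = c
      · have hd2 : 2 ≤ d := by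
          by_contra h
          have hd1 : d = 1 := by omega
          apply hv; omega
        have hlt : u.val + 2 < n := by omega
        obtain ⟨q, hq⟩ := ih (d - 2) (by omega) ⟨u.val + 2, hlt⟩ v (by simp; omega)
          (by simp; omega) hv
        refine ⟨.cons (gr_adj' (Or.inr rfl)) q, ?_⟩
        intro w hw
        rw [SimpleGraph.Walk.support_cons, List.mem_cons] at hw
        rcases hw with rfl | hw
        · exact hu
        · exact hq w hw
      · have hlt : u.val + 1 < n := by omega
        obtain ⟨q, hq⟩ := ih (d - 1) (by omega) ⟨u.val + 1, hlt⟩ v (by simp; omega)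
          (by simpa using h1) hv
        refine ⟨.cons (gr_adj' (Or.inl rfl)) q, ?_⟩
        intro w hw
        rw [SimpleGraph.Walk.support_cons, List.mem_cons] at hw
        rcases hw with rfl | hw
        · exact hu
        · exact hq w hw

private lemma reachUp {n : ℕ} : ∀ d : ℕ, ∀ u v : Fin n, v.val = u.val + d →
    (Gr n).Reachable u v := by
  intro d
  induction d with
  | zero => intro u v h; exact (Fin.ext h.symm : u = v) ▸ SimpleGraph.Reachable.refl u
  | succ d ih =>
    intro u v h
    have hlt : u.val + 1 < n := by omega
    exact ((gr_adj' (i := u) (j := ⟨u.val + 1, hlt⟩) (Or.inl rfl)).reachable).trans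
      (ih ⟨u.val + 1, hlt⟩ v (by simp; omega))

private lemma part1' (n : ℕ) :
    VertexColorAvoidingConnected (Gr n) (fun i : Fin n => i.val % 3) := by
  intro c u v
  constructor
  · rcases le_total u.val v.val with h | h
    · exact reachUp (v.val - u.val) u v (by omega)
    · exact (reachUp (u.val - v.val) v u (by omega)).symm
  · by_cases hu : u.val % 3 = c
    · exact Or.inl hu
    by_cases hv : v.val % 3 = c
    · exact Or.inr (Or.inl hv)
    refine Or.inr (Or.inr ?_)
    rcases le_total u.val v.val with h | h
    · exact avoidWalk c (v.val - u.val) u v (by omega) hu hv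
    · obtain ⟨p, hp⟩ := avoidWalk c (u.val - v.val) v u (by omega) hv hu
      refine ⟨p.reverse, ?_⟩
      intro w hw
      rw [SimpleGraph.Walk.support_reverse, List.mem_reverse] at hw
      exact hp w hw

private lemma cutLemma {n : ℕ} {H : SimpleGraph (Fin n)} {k : ℕ} :
    ∀ {a b : Fin n} (p : H.Walk a b), a.val ≤ k → k < b.val →
    ∃ x y : Fin n, x ∈ p.support ∧ y ∈ p.support ∧ H.Adj x y ∧ x.val ≤ k ∧ k < y.val := by
  intro a b p
  induction p with
  | nil => intro ha hb; omega
  | @cons u v b h q ih =>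
    intro ha hb
    by_cases hk : k < v.val
    · exact ⟨u, v, by simp, by simp, h, ha, hk⟩
    · obtain ⟨x, y, hx, hy, hadj, hxk, hyk⟩ := ih (by omega) hb
      exact ⟨x, y, by simp [hx], by simp [hy], hadj, hxk, hyk⟩

private lemma part2core (n : ℕ) (i j : Fin n) (hij : i.val < j.val)
    (hadj : (Gr n).Adj i j) :
    ¬ VertexColorAvoidingConnected ((Gr n).deleteEdges {s(i, j)})
      (fun i : Fin n => i.val % 3) := by
  set H := (Gr n).deleteEdges {s(i, j)} with hH
  have hstep : j.val = i.val + 1 ∨ j.val = i.val + 2 := by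
    rw [gr_adj] at hadj
    rcases hadj.2 with (h | h) | (h | h) <;> omega
  intro hVC
  rcases hstep with hs | hs
  · obtain ⟨hr, hdis⟩ := hVC ((i.val + 2) % 3) i j
    rcases hdis with h | h | ⟨p, hp⟩
    · simp only at h; omega
    · simp only at h; omega
    · obtain ⟨x, y, hx, hy, hxy, hxk, hyk⟩ := cutLemma (k := i.val) p le_rfl (by omega)
      rw [hH, SimpleGraph.deleteEdges_adj] at hxy
      obtain ⟨hxy, hne⟩ := hxy
      rw [gr_adj] at hxy
      simp only [Set.mem_singleton_iff] at hne
      have hcase : y.val = x.val + 1 ∨ y.val = x.val + 2 := by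
        rcases hxy.2 with (h | h) | (h | h) <;> omega
      rcases hcase with h | h
      · have hx' : x = i := Fin.ext (by omega)
        have hy' : y = j := Fin.ext (by omega)
        exact hne (by rw [hx', hy'])
      · rcases (by omega : x.val = i.val ∨ x.val + 1 = i.val) with h' | h'
        · exact hp y hy (by show y.val % 3 = _; omega)
        · exact hp x hx (by show x.val % 3 = _; omega)
  · obtain ⟨hr, hdis⟩ := hVC ((i.val + 1) % 3) i j
    rcases hdis with h | h | ⟨p, hp⟩
    · simp only at h; omega
    · simp only at h; omega
    · obtain ⟨x, y, hx, hy, hxy, hxk, hyk⟩ := cutLemma (k := i.val) p le_rfl (by omega)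
      rw [hH, SimpleGraph.deleteEdges_adj] at hxy
      obtain ⟨hxy, hne⟩ := hxy
      rw [gr_adj] at hxy
      simp only [Set.mem_singleton_iff] at hne
      have hcase : y.val = x.val + 1 ∨ y.val = x.val + 2 := by
        rcases hxy.2 with (h | h) | (h | h) <;> omega
      rcases hcase with h | h
      · exact hp y hy (by show y.val % 3 = _; omega)
      · rcases (by omega : x.val = i.val ∨ x.val + 1 = i.val) with h' | h'
        · have hx' : x = i := Fin.ext (by omega)
          have hy' : y = j := Fin.ext (by omega)
          exact hne (by rw [hx', hy'])
        · exact hp y hy (by show y.val % 3 = _; omega)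

private def f1 (n : ℕ) (k : Fin (n - 1)) : Sym2 (Fin n) :=
  s(⟨k.val, by have := k.isLt; omega⟩, ⟨k.val + 1, by have := k.isLt; omega⟩)

private def f2 (n : ℕ) (k : Fin (n - 2)) : Sym2 (Fin n) :=
  s(⟨k.val, by have := k.isLt; omega⟩, ⟨k.val + 2, by have := k.isLt; omega⟩)

private lemma edgeSet_eq (n : ℕ) :
    (Gr n).edgeSet = Set.range (f1 n) ∪ Set.range (f2 n) := by
  ext e
  induction e using Sym2.ind with
  | _ x y =>
    simp only [SimpleGraph.mem_edgeSet, gr_adj, Set.mem_union, Set.mem_range, f1, f2]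
    constructor
    · rintro ⟨hne, h⟩
      have hyn := y.isLt
      have hxn := x.isLt
      rcases h with (h | h) | (h | h)
      · exact Or.inl ⟨⟨x.val, by omega⟩, by
          rw [show (⟨x.val, by omega⟩ : Fin n) = x from rfl,
            show (⟨x.val + 1, by omega⟩ : Fin n) = y from Fin.ext h.symm]⟩
      · exact Or.inr ⟨⟨x.val, by omega⟩, by
          rw [show (⟨x.val, by omega⟩ : Fin n) = x from rfl,
            show (⟨x.val + 2, by omega⟩ : Fin n) = y from Fin.ext h.symm]⟩
      · exact Or.inl ⟨⟨y.val, by omega⟩, by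
          rw [show (⟨y.val, by omega⟩ : Fin n) = y from rfl,
            show (⟨y.val + 1, by omega⟩ : Fin n) = x from Fin.ext h.symm, Sym2.eq_swap]⟩
      · exact Or.inr ⟨⟨y.val, by omega⟩, by
          rw [show (⟨y.val, by omega⟩ : Fin n) = y from rfl,
            show (⟨y.val + 2, by omega⟩ : Fin n) = x from Fin.ext h.symm, Sym2.eq_swap]⟩
    · rintro (⟨k, hk⟩ | ⟨k, hk⟩) <;>
      · rw [Sym2.eq_iff] at hk
        rcases hk with ⟨h1, h2⟩ | ⟨h1, h2⟩ <;>
          constructor <;>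
          first
            | (intro he; apply_fun Fin.val at he
               apply_fun Fin.val at h1
               apply_fun Fin.val at h2
               simp at h1 h2; omega)
            | (apply_fun Fin.val at h1
               apply_fun Fin.val at h2
               simp at h1 h2; omega)

private lemma count_eq (n : ℕ) (hn : 3 ≤ n) : (Gr n).edgeSet.ncard = 2 * n - 3 := by
  have hf1 : Function.Injective (f1 n) := by
    intro a b h
    rw [f1, f1, Sym2.eq_iff] at h
    rcases h with ⟨h1, h2⟩ | ⟨h1, h2⟩ <;>
    · apply_fun Fin.val at h1
      apply_fun Fin.val at h2
      simp at h1 h2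
      exact Fin.ext (by omega)
  have hf2 : Function.Injective (f2 n) := by
    intro a b h
    rw [f2, f2, Sym2.eq_iff] at h
    rcases h with ⟨h1, h2⟩ | ⟨h1, h2⟩ <;>
    · apply_fun Fin.val at h1
      apply_fun Fin.val at h2
      simp at h1 h2
      exact Fin.ext (by omega)
  have hdisj : Disjoint (Set.range (f1 n)) (Set.range (f2 n)) := by
    rw [Set.disjoint_left]
    rintro e ⟨a, rfl⟩ ⟨b, hb⟩
    rw [f1, f2, Sym2.eq_iff] at hb
    rcases hb with ⟨h1, h2⟩ | ⟨h1, h2⟩ <;>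
    · apply_fun Fin.val at h1
      apply_fun Fin.val at h2
      simp at h1 h2
      omega
  have h1 : (Set.range (f1 n)).ncard = n - 1 := by
    rw [← Set.image_univ, Set.ncard_image_of_injective _ hf1, Set.ncard_univ,
      Nat.card_eq_fintype_card, Fintype.card_fin]
  have h2 : (Set.range (f2 n)).ncard = n - 2 := by
    rw [← Set.image_univ, Set.ncard_image_of_injective _ hf2, Set.ncard_univ,
      Nat.card_eq_fintype_card, Fintype.card_fin]
  rw [edgeSet_eq, Set.ncard_union_eq hdisj (Set.toFinite _) (Set.toFinite _), h1, h2]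
  omega

end Aux19

/-- For every `n ≥ 3`, the graph on `v_0, …, v_{n-1}` with edges `v_j v_{j+1}` and
`v_j v_{j+2}`, where `v_j` has color `j mod 3`, is vertex-color-avoiding connected, deleting
any single edge destroys vertex-color-avoiding connectivity, and the graph has `2n - 3` edges;
hence the bound `2n - 3` on the number of edges of edge-minimal vertex-color-avoiding connected
graphs colored with exactly 3 colors is sharp. -/
theorem stmt19 (n : ℕ) (hn : 3 ≤ n) :
    VertexColorAvoidingConnected
        (SimpleGraph.fromRel fun i j : Fin n => j.val = i.val + 1 ∨ j.val = i.val + 2)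
        (fun i : Fin n => i.val % 3) ∧
    (∀ e ∈ (SimpleGraph.fromRel
        fun i j : Fin n => j.val = i.val + 1 ∨ j.val = i.val + 2).edgeSet,
      ¬ VertexColorAvoidingConnected
          ((SimpleGraph.fromRel
              fun i j : Fin n => j.val = i.val + 1 ∨ j.val = i.val + 2).deleteEdges {e})
          (fun i : Fin n => i.val % 3)) ∧
    (SimpleGraph.fromRel
        fun i j : Fin n => j.val = i.val + 1 ∨ j.val = i.val + 2).edgeSet.ncard =
      2 * n - 3 := by
  refine ⟨part1' n, ?_, count_eq n hn⟩
  intro e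
  induction e using Sym2.ind with
  | _ x y =>
    intro he
    rw [SimpleGraph.mem_edgeSet] at he
    have hne : x.val ≠ y.val := by
      intro h
      exact (gr_adj.mp he).1 (Fin.ext h)
    rcases lt_or_gt_of_ne hne with h | h
    · exact part2core n x y h he
    · rw [Sym2.eq_swap]
      exact part2core n y x h he.symm
end
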